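/- arXiv:1410.5373 — 7 statements merged into one kernel-verified Lean document; each statement's English description precedes it below -/
import Mathlib

section
/- Let λ : ℕ → (0,∞) satisfy λ(n) = o(n) and converge to a finite positive limit, and let β(n) = log^{(K)} n for some finite integer K > 1. Then there exist a sequence m(n) of test numbers with m(n) ≤ (3/log₂ 3)·β(n)·λ(n)·log₂ n·(1+o(1)), probability distributions μ_n on the set of m(n)×n binary test matrices, and decoders g_n : {0,1}^{m(n)×n} × {0,1}^{m(n)} → 2^{{1,…,n}} such that, with C_n drawn from μ_n independently of the defective set 𝒟_n of the Poisson PGT model on n subjects with parameter λ(n), and y_n the outcome vector, the error probability P(g_n(C_n, y_n) ≠ 𝒟_n) tends to 0 as n → ∞. -/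
open Filter Finset

/-- The `K`-fold iterated natural logarithm. -/
noncomputable def iterLog : ℕ → ℝ → ℝ
  | 0, x => x
  | (K + 1), x => Real.log (iterLog K x)

/-- `P(𝒟 = S)` in the Poisson PGT model on `n` subjects with parameter `lam`. -/
noncomputable def pgtWeight (n : ℕ) (lam : ℝ) (S : Finset (Fin n)) : ℝ :=
  (Real.exp lam / ∑ d ∈ Finset.range (n + 1), lam ^ d / d.factorial) *
    lam ^ S.card * Real.exp (-lam) * (n - S.card).factorial / n.factorial

/-- Outcome vector: test `j` is positive iff some defective participates in it. -/
def outcome {m n : ℕ} (C : Fin m → Fin n → Bool) (S : Finset (Fin n)) : Fin m → Bool :=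
  fun j => decide (∃ i ∈ S, C j i = true)

lemma row_agree_card {n : ℕ} {S S' : Finset (Fin n)} (h : S ≠ S') :
    ((univ : Finset (Fin n → Bool)).filter
      (fun x => decide (∃ i ∈ S, x i = true) = decide (∃ i ∈ S', x i = true))).card
      ≤ 2^n - 2^(n - (S ∪ S').card) := by
  classical
  obtain ⟨i, hi⟩ : ∃ i, ¬ ((i ∈ S) ↔ (i ∈ S')) := by
    by_contra hc
    push_neg at hc
    exact h (Finset.ext fun a => hc a)
  set T := S ∪ S' with hT
  set B : Finset (Fin n → Bool) :=
    Fintype.piFinset (fun j => if j ∈ T then {decide (j = i)} else (univ : Finset Bool)) with hB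
  have hBcard : B.card = 2^(n - T.card) := by
    rw [hB, Fintype.card_piFinset]
    have hc : ∀ j : Fin n,
        (if j ∈ T then ({decide (j = i)} : Finset Bool) else univ).card
          = if j ∈ T then 1 else 2 := by
      intro j; split <;> simp
    rw [Finset.prod_congr rfl (fun j _ => hc j), ← Finset.prod_mul_prod_compl T]
    have e1 : ∀ j ∈ T, (if j ∈ T then (1:ℕ) else 2) = 1 := fun j hj => if_pos hj
    have e2 : ∀ j ∈ Tᶜ, (if j ∈ T then (1:ℕ) else 2) = 2 := fun j hj =>
      if_neg (Finset.mem_compl.mp hj)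
    rw [Finset.prod_congr rfl e1, Finset.prod_congr rfl e2]
    simp [Finset.card_compl]
  have hBsub : B ⊆ univ.filter
      (fun x => ¬ (decide (∃ i ∈ S, x i = true) = decide (∃ i ∈ S', x i = true))) := by
    intro x hx
    rw [hB, Fintype.mem_piFinset] at hx
    have hxT : ∀ j ∈ T, x j = decide (j = i) := by
      intro j hj
      have := hx j
      rw [if_pos hj] at this
      simpa using this
    have key : ∀ U : Finset (Fin n), U ⊆ T → ((∃ j ∈ U, x j = true) ↔ i ∈ U) := by
      intro U hU
      constructor
      · rintro ⟨j, hjU, hjx⟩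
        rw [hxT j (hU hjU)] at hjx
        simp at hjx
        rwa [← hjx]
      · intro hiU
        exact ⟨i, hiU, by rw [hxT i (hU hiU)]; simp⟩
    simp only [mem_filter, mem_univ, true_and]
    rw [decide_eq_decide, key S Finset.subset_union_left, key S' Finset.subset_union_right]
    exact hi
  have htot : ((univ : Finset (Fin n → Bool)).filter
        (fun x => decide (∃ i ∈ S, x i = true) = decide (∃ i ∈ S', x i = true))).card
      + ((univ : Finset (Fin n → Bool)).filter
        (fun x => ¬ (decide (∃ i ∈ S, x i = true) = decide (∃ i ∈ S', x i = true)))).card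
      = 2^n := by
    rw [Finset.card_filter_add_card_filter_not]
    simp [Finset.card_univ]
  have hle : 2^(n - T.card) ≤ ((univ : Finset (Fin n → Bool)).filter
      (fun x => ¬ (decide (∃ i ∈ S, x i = true) = decide (∃ i ∈ S', x i = true)))).card := by
    rw [← hBcard]; exact Finset.card_le_card hBsub
  rw [Nat.eq_sub_of_add_eq htot]
  exact Nat.sub_le_sub_left hle _

lemma coll_sum {m n : ℕ} {S S' : Finset (Fin n)} (h : S ≠ S') :
    ∑ C : Fin m → Fin n → Bool,
      ((1:ℝ)/2)^(m*n) * (if outcome C S = outcome C S' then 1 else 0)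
      ≤ (1 - ((1:ℝ)/2)^((S ∪ S').card))^m := by
  classical
  set t := (S ∪ S').card with htdef
  have ht : t ≤ n := by
    rw [htdef]; simpa using Finset.card_le_univ (S ∪ S')
  have hrw : ∀ C : Fin m → Fin n → Bool,
      ((1:ℝ)/2)^(m*n) * (if outcome C S = outcome C S' then 1 else 0)
      = ∏ j : Fin m, (((1:ℝ)/2)^n *
          (if decide (∃ i ∈ S, C j i = true) = decide (∃ i ∈ S', C j i = true)
            then (1:ℝ) else 0)) := by
    intro C
    rw [Finset.prod_mul_distrib, Finset.prod_const, Finset.prod_boole]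
    have h1 : (((1:ℝ)/2)^n)^(univ : Finset (Fin m)).card = ((1:ℝ)/2)^(m*n) := by
      rw [← pow_mul]
      simp [mul_comm]
    have h2 : (outcome C S = outcome C S') ↔
        (∀ j ∈ (univ : Finset (Fin m)),
          decide (∃ i ∈ S, C j i = true) = decide (∃ i ∈ S', C j i = true)) := by
      constructor
      · intro he j _; exact congrFun he j
      · intro hj; funext j; exact hj j (mem_univ j)
    rw [h1]
    refine congrArg _ ?_
    by_cases hc : outcome C S = outcome C S'
    · rw [if_pos hc, if_pos (h2.mp hc)]
    · rw [if_neg hc, if_neg (fun hx => hc (h2.mpr hx))]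
  rw [Finset.sum_congr rfl (fun C _ => hrw C)]
  have hswap : ∑ C : Fin m → Fin n → Bool, ∏ j : Fin m, (((1:ℝ)/2)^n *
        (if decide (∃ i ∈ S, C j i = true) = decide (∃ i ∈ S', C j i = true)
          then (1:ℝ) else 0))
      = ∏ j : Fin m, ∑ x : Fin n → Bool, (((1:ℝ)/2)^n *
        (if decide (∃ i ∈ S, x i = true) = decide (∃ i ∈ S', x i = true)
          then (1:ℝ) else 0)) := by
    rw [Finset.prod_univ_sum]
    rw [← Fintype.piFinset_univ]
  rw [hswap]
  have hrowbound : ∑ x : Fin n → Bool, (((1:ℝ)/2)^n *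
        (if decide (∃ i ∈ S, x i = true) = decide (∃ i ∈ S', x i = true)
          then (1:ℝ) else 0)) ≤ 1 - ((1:ℝ)/2)^t := by
    rw [← Finset.mul_sum, Finset.sum_boole]
    have hcard := row_agree_card h
    have hsub : 2^(n - t) ≤ 2^n := Nat.pow_le_pow_right (by norm_num) (Nat.sub_le _ _)
    have hcast : (((univ : Finset (Fin n → Bool)).filter
        (fun x => decide (∃ i ∈ S, x i = true) = decide (∃ i ∈ S', x i = true))).card : ℝ)
        ≤ (2:ℝ)^n - (2:ℝ)^(n - t) := by
      calc _ ≤ ((2^n - 2^(n-t) : ℕ) : ℝ) := by exact_mod_cast hcard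
        _ = (2:ℝ)^n - (2:ℝ)^(n-t) := by rw [Nat.cast_sub hsub]; push_cast; ring
    have h2t : ((2:ℝ))^(n-t) = 2^n / 2^t := by
      rw [eq_div_iff (by positivity), ← pow_add, Nat.sub_add_cancel ht]
    calc ((1:ℝ)/2)^n * _ ≤ ((1:ℝ)/2)^n * ((2:ℝ)^n - (2:ℝ)^(n - t)) := by
          apply mul_le_mul_of_nonneg_left hcast (by positivity)
      _ = 1 - ((1:ℝ)/2)^t := by
          rw [h2t]
          rw [div_pow, one_pow, div_pow, one_pow]
          field_simp
  calc ∏ j : Fin m, ∑ x : Fin n → Bool, (((1:ℝ)/2)^n *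
        (if decide (∃ i ∈ S, x i = true) = decide (∃ i ∈ S', x i = true)
          then (1:ℝ) else 0))
      ≤ ∏ _j : Fin m, (1 - ((1:ℝ)/2)^t) := by
        apply Finset.prod_le_prod
        · intro j _
          apply Finset.sum_nonneg
          intro x _
          positivity
        · intro j _
          exact hrowbound
    _ = (1 - ((1:ℝ)/2)^t)^m := by rw [Finset.prod_const]; simp

lemma sum_card_group {n : ℕ} (f : ℕ → ℝ) :
    ∑ S : Finset (Fin n), f S.card = ∑ k ∈ range (n+1), (n.choose k : ℝ) * f k := by
  have := Finset.sum_powerset_apply_card f (x := (univ : Finset (Fin n)))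
  simp only [Finset.powerset_univ, Finset.card_univ, Fintype.card_fin] at this
  rw [this]
  exact Finset.sum_congr rfl (fun k _ => by rw [nsmul_eq_mul])

lemma denom_pos {n : ℕ} {lam : ℝ} (hl : 0 ≤ lam) :
    0 < ∑ d ∈ Finset.range (n + 1), lam ^ d / d.factorial := by
  apply Finset.sum_pos'
  · intro k _; positivity
  · exact ⟨0, by simp, by norm_num⟩

lemma denom_ge_one {n : ℕ} {lam : ℝ} (hl : 0 ≤ lam) :
    1 ≤ ∑ d ∈ Finset.range (n + 1), lam ^ d / d.factorial := by
  have h0 : ((0:ℕ) ∈ range (n+1)) := by simp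
  have := Finset.single_le_sum (f := fun d => lam ^ d / d.factorial)
    (fun k _ => by positivity) h0
  simpa using this

lemma pgt_nonneg {n : ℕ} {lam : ℝ} (hl : 0 ≤ lam) (S : Finset (Fin n)) :
    0 ≤ pgtWeight n lam S := by
  unfold pgtWeight
  have hD := denom_pos (n := n) hl
  positivity

lemma choose_term {n k : ℕ} (hk : k ≤ n) :
    (n.choose k : ℝ) * (n - k).factorial / n.factorial = 1 / k.factorial := by
  have h := Nat.choose_mul_factorial_mul_factorial hk
  have hnf : (n.factorial : ℝ) ≠ 0 := by exact_mod_cast n.factorial_ne_zero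
  have hkf : (k.factorial : ℝ) ≠ 0 := by exact_mod_cast k.factorial_ne_zero
  field_simp
  have : (n.choose k : ℝ) * k.factorial * (n-k).factorial = n.factorial := by
    exact_mod_cast congrArg (Nat.cast : ℕ → ℝ) h
  linarith [this]

lemma pgt_sum {n : ℕ} {lam : ℝ} (hl : 0 < lam) :
    ∑ S : Finset (Fin n), pgtWeight n lam S = 1 := by
  have hD := denom_pos (n := n) hl.le
  set D := ∑ d ∈ Finset.range (n + 1), lam ^ d / d.factorial with hDdef
  have : ∑ S : Finset (Fin n), pgtWeight n lam S
      = ∑ k ∈ range (n+1), (n.choose k : ℝ) *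
        ((Real.exp lam / D) * lam ^ k * Real.exp (-lam) * (n - k).factorial / n.factorial) :=
    sum_card_group
      (fun k => (Real.exp lam / D) * lam ^ k * Real.exp (-lam) * (n - k).factorial / n.factorial)
  rw [this]
  have hterm : ∀ k ∈ range (n+1), (n.choose k : ℝ) *
      ((Real.exp lam / D) * lam ^ k * Real.exp (-lam) * (n - k).factorial / n.factorial)
      = (lam ^ k / k.factorial) / D := by
    intro k hk
    rw [mem_range, Nat.lt_succ_iff] at hk
    have hct := choose_term (n := n) (k := k) hk
    have hee : Real.exp lam * Real.exp (-lam) = 1 := by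
      rw [← Real.exp_add]; simp
    have hre : (n.choose k : ℝ) *
        ((Real.exp lam / D) * lam ^ k * Real.exp (-lam) * (n - k).factorial / n.factorial)
        = (Real.exp lam * Real.exp (-lam)) * lam ^ k *
          ((n.choose k : ℝ) * (n - k).factorial / n.factorial) / D := by ring
    rw [hre, hee, hct]
    ring
  rw [Finset.sum_congr rfl hterm, ← Finset.sum_div]
  rw [← hDdef]
  exact div_self (ne_of_gt hD)

lemma pgt_tail {n d : ℕ} {lam M : ℝ} (hl : 0 < lam) (hM : lam ≤ M) :
    ∑ S : Finset (Fin n), pgtWeight n lam S * (if d < S.card then 1 else 0)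
      ≤ Real.exp M - ∑ k ∈ range (d+1), M ^ k / k.factorial := by
  have hM0 : 0 ≤ M := le_trans hl.le hM
  have hD1 := denom_ge_one (n := n) hl.le
  have hD0 : 0 < ∑ j ∈ Finset.range (n + 1), lam ^ j / j.factorial := lt_of_lt_of_le one_pos hD1
  set D := ∑ j ∈ Finset.range (n + 1), lam ^ j / j.factorial with hDdef
  have hgr : ∑ S : Finset (Fin n), pgtWeight n lam S * (if d < S.card then 1 else 0)
      = ∑ k ∈ range (n+1), (n.choose k : ℝ) *
        ((Real.exp lam / D) * lam ^ k * Real.exp (-lam) * (n - k).factorial / n.factorial *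
          (if d < k then 1 else 0)) :=
    sum_card_group (fun k =>
      (Real.exp lam / D) * lam ^ k * Real.exp (-lam) * (n - k).factorial / n.factorial *
        (if d < k then 1 else 0))
  rw [hgr]
  have hstep : ∀ k ∈ range (n+1), (n.choose k : ℝ) *
      ((Real.exp lam / D) * lam ^ k * Real.exp (-lam) * (n - k).factorial / n.factorial *
        (if d < k then 1 else 0))
      ≤ (if d < k then 1 else 0) * (M ^ k / k.factorial) := by
    intro k hk
    rw [mem_range, Nat.lt_succ_iff] at hk
    have hct := choose_term (n := n) (k := k) hk
    have hee : Real.exp lam * Real.exp (-lam) = 1 := by rw [← Real.exp_add]; simp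
    have hre : (n.choose k : ℝ) *
        ((Real.exp lam / D) * lam ^ k * Real.exp (-lam) * (n - k).factorial / n.factorial *
          (if d < k then 1 else 0))
        = (Real.exp lam * Real.exp (-lam)) * lam ^ k *
          ((n.choose k : ℝ) * (n - k).factorial / n.factorial) / D *
            (if d < k then 1 else 0) := by ring
    rw [hre, hee, hct]
    split
    · rw [one_mul, mul_one, one_mul]
      calc lam ^ k * (1 / (k.factorial:ℝ)) / D ≤ lam ^ k * (1 / (k.factorial:ℝ)) := by
            apply div_le_self (by positivity) hD1
        _ = lam ^ k / (k.factorial:ℝ) := by ring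
        _ ≤ M ^ k / (k.factorial:ℝ) := by gcongr
    · simp
  calc ∑ k ∈ range (n+1), (n.choose k : ℝ) *
      ((Real.exp lam / D) * lam ^ k * Real.exp (-lam) * (n - k).factorial / n.factorial *
        (if d < k then 1 else 0))
      ≤ ∑ k ∈ range (n+1), (if d < k then 1 else 0) * (M ^ k / k.factorial) :=
        Finset.sum_le_sum hstep
    _ = ∑ k ∈ (range (n+1)).filter (fun k => d < k), M ^ k / k.factorial := by
        rw [Finset.sum_filter]
        exact Finset.sum_congr rfl (fun k _ => boole_mul _ _)
    _ ≤ ∑ k ∈ Ico (d+1) (max (n+1) (d+1)), M ^ k / k.factorial := by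
        apply Finset.sum_le_sum_of_subset_of_nonneg
        · intro k hk
          rw [Finset.mem_filter, Finset.mem_range] at hk
          rw [Finset.mem_Ico]
          exact ⟨hk.2, lt_of_lt_of_le hk.1 (le_max_left _ _)⟩
        · intro k _ _; positivity
    _ = ∑ k ∈ range (max (n+1) (d+1)), M ^ k / k.factorial
        - ∑ k ∈ range (d+1), M ^ k / k.factorial :=
        Finset.sum_Ico_eq_sub _ (le_max_right _ _)
    _ ≤ Real.exp M - ∑ k ∈ range (d+1), M ^ k / k.factorial := by
        apply sub_le_sub_right
        exact Real.sum_le_exp_of_nonneg hM0 _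

open scoped Classical in
noncomputable def decode (n d : ℕ) {m : ℕ} (C : Fin m → Fin n → Bool) (y : Fin m → Bool) :
    Finset (Fin n) :=
  if h : ∃! S : Finset (Fin n), S.card ≤ d ∧ outcome C S = y then h.choose else ∅

lemma decode_eq {n d m : ℕ} {C : Fin m → Fin n → Bool} {S : Finset (Fin n)} (hS : S.card ≤ d)
    (hu : ∀ S' : Finset (Fin n), S'.card ≤ d → outcome C S' = outcome C S → S' = S) :
    decode n d C (outcome C S) = S := by
  have hex : ∃! T : Finset (Fin n), T.card ≤ d ∧ outcome C T = outcome C S :=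
    ⟨S, ⟨hS, rfl⟩, fun T hT => hu T hT.1 hT.2⟩
  rw [decode]
  rw [dif_pos hex]
  exact hu _ hex.choose_spec.1.1 hex.choose_spec.1.2

lemma mu_sum (mm n : ℕ) : ∑ _C : Fin mm → Fin n → Bool, ((1:ℝ)/2)^(mm*n) = 1 := by
  rw [Finset.sum_const, Finset.card_univ]
  have hcard : Fintype.card (Fin mm → Fin n → Bool) = 2^(mm*n) := by
    rw [Fintype.card_fun, Fintype.card_fun]
    simp [← pow_mul, mul_comm]
  rw [hcard, nsmul_eq_mul]
  push_cast
  rw [← mul_pow]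
  norm_num

lemma card_small (n d : ℕ) :
    ((((univ : Finset (Finset (Fin n)))).filter (fun S => S.card ≤ d)).card : ℝ)
      ≤ ((d:ℝ)+1) * ((n:ℝ)+1)^d := by
  classical
  have h1 : ((((univ : Finset (Finset (Fin n)))).filter (fun S => S.card ≤ d)).card : ℝ)
      = ∑ S : Finset (Fin n), (if S.card ≤ d then (1:ℝ) else 0) := by
    rw [Finset.sum_boole]
  rw [h1, sum_card_group (fun k => if k ≤ d then (1:ℝ) else 0)]
  have h2 : ∀ k ∈ range (n+1), (n.choose k : ℝ) * (if k ≤ d then (1:ℝ) else 0)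
      ≤ (if k ≤ d then (1:ℝ) else 0) * ((n:ℝ)+1)^d := by
    intro k _
    split
    · rename_i hkd
      rw [mul_one, one_mul]
      calc (n.choose k : ℝ) ≤ ((n^k : ℕ) : ℝ) := by exact_mod_cast Nat.choose_le_pow n k
        _ = ((n:ℝ))^k := by push_cast; ring
        _ ≤ ((n:ℝ)+1)^k := by gcongr <;> linarith [Nat.cast_nonneg (α := ℝ) n]
        _ ≤ ((n:ℝ)+1)^d := by
            apply pow_le_pow_right₀ (by linarith [Nat.cast_nonneg (α := ℝ) n]) hkd
    · simp
  calc ∑ k ∈ range (n+1), (n.choose k : ℝ) * (if k ≤ d then (1:ℝ) else 0)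
      ≤ ∑ k ∈ range (n+1), (if k ≤ d then (1:ℝ) else 0) * ((n:ℝ)+1)^d :=
        Finset.sum_le_sum h2
    _ = (((range (n+1)).filter (fun k => k ≤ d)).card : ℝ) * ((n:ℝ)+1)^d := by
        rw [← Finset.sum_mul, Finset.sum_boole]
    _ ≤ ((d:ℝ)+1) * ((n:ℝ)+1)^d := by
        have : ((range (n+1)).filter (fun k => k ≤ d)).card ≤ d+1 := by
          have hsub : ((range (n+1)).filter (fun k => k ≤ d)) ⊆ range (d+1) := by
            intro k hk
            rw [Finset.mem_filter] at hk
            rw [Finset.mem_range]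
            omega
          simpa using Finset.card_le_card hsub
        have h3 : (((range (n+1)).filter (fun k => k ≤ d)).card : ℝ) ≤ (d:ℝ)+1 := by
          exact_mod_cast this
        apply mul_le_mul_of_nonneg_right h3 (by positivity)

lemma final_numeric (n dd : ℕ) :
    ((dd:ℝ)+1) * ((n:ℝ)+1)^dd *
      (1 - ((1:ℝ)/2)^(2*dd))^(4^dd*(dd+2)*(Nat.log 2 n + 2))
      ≤ Real.exp (-(2*(Nat.log 2 n : ℝ)+4)) := by
  set L : ℕ := Nat.log 2 n with hL
  set mm : ℕ := 4^dd*(dd+2)*(L + 2) with hmm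
  have hx0 : (0:ℝ) < ((1:ℝ)/2)^(2*dd) := by positivity
  have hx1 : ((1:ℝ)/2)^(2*dd) ≤ 1 := pow_le_one₀ (by norm_num) (by norm_num)
  have e1 : ((dd:ℝ)+1) ≤ Real.exp dd := by
    have := Real.add_one_le_exp (dd : ℝ)
    linarith
  have e2 : ((n:ℝ)+1)^dd ≤ Real.exp ((dd:ℝ) * ((L:ℝ)+1)) := by
    have hn2 : ((n:ℝ)+1) ≤ (2:ℝ)^(L+1) := by
      have h := Nat.lt_pow_succ_log_self (b := 2) (by norm_num) n
      have h' : n + 1 ≤ 2^(L+1) := h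
      exact_mod_cast h'
    have h2exp : (2:ℝ) ≤ Real.exp 1 := by
      have := Real.add_one_le_exp (1:ℝ)
      linarith
    calc ((n:ℝ)+1)^dd ≤ ((2:ℝ)^(L+1))^dd := by
          apply pow_le_pow_left₀ (by positivity) hn2
      _ ≤ ((Real.exp 1)^(L+1))^dd := by
          apply pow_le_pow_left₀ (by positivity)
          apply pow_le_pow_left₀ (by norm_num) h2exp
      _ = Real.exp ((dd:ℝ) * ((L:ℝ)+1)) := by
          rw [← pow_mul, ← Real.exp_nat_mul]
          congr 1
          push_cast
          ring
  have e3 : (1 - ((1:ℝ)/2)^(2*dd))^mm ≤ Real.exp (-(((dd:ℝ)+2) * ((L:ℝ)+2))) := by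
    calc (1 - ((1:ℝ)/2)^(2*dd))^mm ≤ (Real.exp (-(((1:ℝ)/2)^(2*dd))))^mm := by
          apply pow_le_pow_left₀ (by linarith)
          have := Real.add_one_le_exp (-(((1:ℝ)/2)^(2*dd)))
          linarith
      _ = Real.exp (-((mm:ℝ) * ((1:ℝ)/2)^(2*dd))) := by
          rw [← Real.exp_nat_mul]; congr 1; ring
      _ = Real.exp (-(((dd:ℝ)+2) * ((L:ℝ)+2))) := by
          congr 1
          have hpow : ((4:ℝ))^dd * ((1:ℝ)/2)^(2*dd) = 1 := by
            rw [pow_mul, ← mul_pow]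
            norm_num
          have : (mm:ℝ) = 4^dd*((dd:ℝ)+2)*((L:ℝ) + 2) := by
            rw [hmm]; push_cast; ring
          rw [this]
          linear_combination (-(((dd:ℝ)+2)*((L:ℝ)+2))) * hpow
  calc ((dd:ℝ)+1) * ((n:ℝ)+1)^dd * (1 - ((1:ℝ)/2)^(2*dd))^mm
      ≤ Real.exp dd * Real.exp ((dd:ℝ) * ((L:ℝ)+1)) * Real.exp (-(((dd:ℝ)+2) * ((L:ℝ)+2))) := by
        apply mul_le_mul (mul_le_mul e1 e2 (by positivity) (by positivity)) e3
          (pow_nonneg (by linarith) _) (by positivity)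
    _ = Real.exp ((dd:ℝ) + (dd:ℝ) * ((L:ℝ)+1) - ((dd:ℝ)+2) * ((L:ℝ)+2)) := by
        rw [← Real.exp_add, ← Real.exp_add]
        ring_nf
    _ = Real.exp (-(2*(L:ℝ)+4)) := by
        congr 1
        ring

lemma ite_one_nonneg {p : Prop} [Decidable p] : (0:ℝ) ≤ if p then (1:ℝ) else 0 := by
  split <;> norm_num

lemma error_le {n dd mm : ℕ} {lam M : ℝ} (hl : 0 < lam) (hM : lam ≤ M)
    (hmm : mm = 4^dd*(dd+2)*(Nat.log 2 n + 2)) :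
    ∑ C : Fin mm → Fin n → Bool, ∑ S : Finset (Fin n),
      ((1:ℝ)/2)^(mm*n) * pgtWeight n lam S *
        (if decode n dd C (outcome C S) ≠ S then (1:ℝ) else 0)
      ≤ (Real.exp M - ∑ k ∈ range (dd+1), M ^ k / k.factorial)
        + Real.exp (-(2*(Nat.log 2 n : ℝ)+4)) := by
  classical
  set μc : ℝ := ((1:ℝ)/2)^(mm*n) with hμc
  have hμ0 : 0 ≤ μc := by positivity
  set P : Finset (Fin n) → ℝ := pgtWeight n lam with hP
  have hP0 : ∀ S, 0 ≤ P S := fun S => pgt_nonneg hl.le S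
  set filt : Finset (Fin n) → Finset (Finset (Fin n)) :=
    fun S => univ.filter (fun S' => S' ≠ S ∧ S'.card ≤ dd) with hfilt
  -- pointwise bound
  have hpt : ∀ (C : Fin mm → Fin n → Bool) (S : Finset (Fin n)),
      μc * P S * (if decode n dd C (outcome C S) ≠ S then (1:ℝ) else 0)
      ≤ μc * (P S * (if dd < S.card then (1:ℝ) else 0))
        + ∑ S' ∈ filt S, (P S * (if S.card ≤ dd then (1:ℝ) else 0) *
            (μc * (if outcome C S' = outcome C S then (1:ℝ) else 0))) := by
    intro C S
    have hind : μc * P S * (if decode n dd C (outcome C S) ≠ S then (1:ℝ) else 0)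
        ≤ μc * P S * ((if dd < S.card then (1:ℝ) else 0)
          + (if S.card ≤ dd then (1:ℝ) else 0) *
            ∑ S' ∈ filt S, (if outcome C S' = outcome C S then (1:ℝ) else 0)) := by
      apply mul_le_mul_of_nonneg_left _ (mul_nonneg hμ0 (hP0 S))
      by_cases hc : S.card ≤ dd
      · by_cases hex : ∃ S', S' ≠ S ∧ S'.card ≤ dd ∧ outcome C S' = outcome C S
        · obtain ⟨S₀, h1, h2, h3⟩ := hex
          have hmem : S₀ ∈ filt S := by
            rw [hfilt]; simp [h1, h2]
          have hsum : (1:ℝ) ≤ ∑ S' ∈ filt S,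
              (if outcome C S' = outcome C S then (1:ℝ) else 0) := by
            calc (1:ℝ) = (if outcome C S₀ = outcome C S then (1:ℝ) else 0) := by
                  rw [if_pos h3]
              _ ≤ _ := Finset.single_le_sum
                (f := fun S' => if outcome C S' = outcome C S then (1:ℝ) else 0)
                (fun i _ => ite_one_nonneg) hmem
          have hle1 : (if decode n dd C (outcome C S) ≠ S then (1:ℝ) else 0) ≤ 1 := by
            split <;> norm_num
          have h0 : (0:ℝ) ≤ (if dd < S.card then (1:ℝ) else 0) := ite_one_nonneg
          rw [if_pos hc]
          linarith
        · push_neg at hex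
          have hdec : decode n dd C (outcome C S) = S := by
            apply decode_eq hc
            intro S' h1 h2
            by_contra hne
            exact hex S' hne h1 h2
          rw [if_neg (by simp [hdec])]
          have h0 : (0:ℝ) ≤ (if dd < S.card then (1:ℝ) else 0) := ite_one_nonneg
          have h1 : (0:ℝ) ≤ (if S.card ≤ dd then (1:ℝ) else 0) *
              ∑ S' ∈ filt S, (if outcome C S' = outcome C S then (1:ℝ) else 0) := by
            apply mul_nonneg ite_one_nonneg
            apply Finset.sum_nonneg
            intro S' _
            exact ite_one_nonneg
          linarith
      · have hle1 : (if decode n dd C (outcome C S) ≠ S then (1:ℝ) else 0) ≤ 1 := by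
          split <;> norm_num
        rw [if_pos (Nat.lt_of_not_le hc), if_neg hc]
        simp only [zero_mul, add_zero]
        linarith
    calc μc * P S * (if decode n dd C (outcome C S) ≠ S then (1:ℝ) else 0) ≤ _ := hind
      _ = μc * (P S * (if dd < S.card then (1:ℝ) else 0))
        + ∑ S' ∈ filt S, (P S * (if S.card ≤ dd then (1:ℝ) else 0) *
            (μc * (if outcome C S' = outcome C S then (1:ℝ) else 0))) := by
        rw [Finset.mul_sum]
        rw [mul_add]
        congr 1
        · ring
        · rw [Finset.mul_sum]
          apply Finset.sum_congr rfl
          intro S' _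
          ring
  -- sum the pointwise bound
  have hsplit : ∑ C : Fin mm → Fin n → Bool, ∑ S : Finset (Fin n),
      μc * P S * (if decode n dd C (outcome C S) ≠ S then (1:ℝ) else 0)
      ≤ (∑ C : Fin mm → Fin n → Bool, ∑ S : Finset (Fin n),
          μc * (P S * (if dd < S.card then (1:ℝ) else 0)))
        + ∑ C : Fin mm → Fin n → Bool, ∑ S : Finset (Fin n), ∑ S' ∈ filt S,
            (P S * (if S.card ≤ dd then (1:ℝ) else 0) *
              (μc * (if outcome C S' = outcome C S then (1:ℝ) else 0))) := by
    rw [← Finset.sum_add_distrib]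
    apply Finset.sum_le_sum
    intro C _
    rw [← Finset.sum_add_distrib]
    exact Finset.sum_le_sum (fun S _ => hpt C S)
  refine le_trans hsplit ?_
  have hA : (∑ C : Fin mm → Fin n → Bool, ∑ S : Finset (Fin n),
        μc * (P S * (if dd < S.card then (1:ℝ) else 0)))
      ≤ Real.exp M - ∑ k ∈ range (dd+1), M ^ k / k.factorial := by
    have h1 : ∀ C : Fin mm → Fin n → Bool, ∑ S : Finset (Fin n),
        μc * (P S * (if dd < S.card then (1:ℝ) else 0))
        = μc * ∑ S : Finset (Fin n), P S * (if dd < S.card then (1:ℝ) else 0) := by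
      intro C; rw [Finset.mul_sum]
    rw [Finset.sum_congr rfl (fun C _ => h1 C), ← Finset.sum_mul, mu_sum, one_mul]
    exact pgt_tail hl hM
  have hB : (∑ C : Fin mm → Fin n → Bool, ∑ S : Finset (Fin n), ∑ S' ∈ filt S,
        (P S * (if S.card ≤ dd then (1:ℝ) else 0) *
          (μc * (if outcome C S' = outcome C S then (1:ℝ) else 0))))
      ≤ Real.exp (-(2*(Nat.log 2 n : ℝ)+4)) := by
    rw [Finset.sum_comm]
    have hperS : ∀ S : Finset (Fin n),
        (∑ C : Fin mm → Fin n → Bool, ∑ S' ∈ filt S,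
          (P S * (if S.card ≤ dd then (1:ℝ) else 0) *
            (μc * (if outcome C S' = outcome C S then (1:ℝ) else 0))))
        ≤ P S * (((dd:ℝ)+1) * ((n:ℝ)+1)^dd * (1 - ((1:ℝ)/2)^(2*dd))^mm) := by
      intro S
      rw [Finset.sum_comm]
      have hinner : ∀ S' ∈ filt S,
          (∑ C : Fin mm → Fin n → Bool,
            (P S * (if S.card ≤ dd then (1:ℝ) else 0) *
              (μc * (if outcome C S' = outcome C S then (1:ℝ) else 0))))
          = P S * (if S.card ≤ dd then (1:ℝ) else 0) *
            ∑ C : Fin mm → Fin n → Bool,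
              (μc * (if outcome C S' = outcome C S then (1:ℝ) else 0)) := by
        intro S' _
        rw [Finset.mul_sum]
      rw [Finset.sum_congr rfl hinner]
      by_cases hc : S.card ≤ dd
      · simp only [if_pos hc, mul_one]
        have hcoll : ∀ S' ∈ filt S,
            P S * ∑ C : Fin mm → Fin n → Bool,
              (μc * (if outcome C S' = outcome C S then (1:ℝ) else 0))
            ≤ P S * (1 - ((1:ℝ)/2)^(2*dd))^mm := by
          intro S' hS'
          rw [hfilt, Finset.mem_filter] at hS'
          obtain ⟨-, hne, hcard'⟩ := hS'
          apply mul_le_mul_of_nonneg_left _ (hP0 S)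
          calc ∑ C : Fin mm → Fin n → Bool,
              (μc * (if outcome C S' = outcome C S then (1:ℝ) else 0))
              ≤ (1 - ((1:ℝ)/2)^((S' ∪ S).card))^mm := coll_sum hne
            _ ≤ (1 - ((1:ℝ)/2)^(2*dd))^mm := by
              apply pow_le_pow_left₀
              · have : ((1:ℝ)/2)^((S' ∪ S).card) ≤ 1 := pow_le_one₀ (by norm_num) (by norm_num)
                linarith
              · have hun : (S' ∪ S).card ≤ 2*dd := by
                  calc (S' ∪ S).card ≤ S'.card + S.card := Finset.card_union_le _ _
                    _ ≤ 2*dd := by omega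
                have := pow_le_pow_of_le_one (by norm_num : (0:ℝ) ≤ 1/2)
                  (by norm_num : (1:ℝ)/2 ≤ 1) hun
                linarith
        calc ∑ S' ∈ filt S, (P S * ∑ C : Fin mm → Fin n → Bool,
              (μc * (if outcome C S' = outcome C S then (1:ℝ) else 0)))
            ≤ ∑ S' ∈ filt S, P S * (1 - ((1:ℝ)/2)^(2*dd))^mm := Finset.sum_le_sum hcoll
          _ = (filt S).card * (P S * (1 - ((1:ℝ)/2)^(2*dd))^mm) := by
              rw [Finset.sum_const, nsmul_eq_mul]
          _ ≤ P S * (((dd:ℝ)+1) * ((n:ℝ)+1)^dd * (1 - ((1:ℝ)/2)^(2*dd))^mm) := by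
              have hQ0 : (0:ℝ) ≤ (1 - ((1:ℝ)/2)^(2*dd))^mm := by
                apply pow_nonneg
                have : ((1:ℝ)/2)^(2*dd) ≤ 1 := pow_le_one₀ (by norm_num) (by norm_num)
                linarith
              have hcardb : ((filt S).card : ℝ) ≤ ((dd:ℝ)+1) * ((n:ℝ)+1)^dd := by
                refine le_trans ?_ (card_small n dd)
                have hsub : filt S ⊆ (univ : Finset (Finset (Fin n))).filter
                    (fun T => T.card ≤ dd) := by
                  intro T hT
                  rw [hfilt, Finset.mem_filter] at hT
                  rw [Finset.mem_filter]
                  exact ⟨hT.1, hT.2.2⟩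
                exact_mod_cast Finset.card_le_card hsub
              calc ((filt S).card : ℝ) * (P S * (1 - ((1:ℝ)/2)^(2*dd))^mm)
                  ≤ (((dd:ℝ)+1) * ((n:ℝ)+1)^dd) * (P S * (1 - ((1:ℝ)/2)^(2*dd))^mm) := by
                    apply mul_le_mul_of_nonneg_right hcardb
                      (mul_nonneg (hP0 S) hQ0)
                _ = P S * (((dd:ℝ)+1) * ((n:ℝ)+1)^dd * (1 - ((1:ℝ)/2)^(2*dd))^mm) := by ring
      · simp only [if_neg hc, mul_zero, zero_mul, Finset.sum_const_zero]
        have hQ0 : (0:ℝ) ≤ (1 - ((1:ℝ)/2)^(2*dd))^mm := by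
          apply pow_nonneg
          have : ((1:ℝ)/2)^(2*dd) ≤ 1 := pow_le_one₀ (by norm_num) (by norm_num)
          linarith
        apply mul_nonneg (hP0 S)
        apply mul_nonneg _ hQ0
        positivity
    calc ∑ S : Finset (Fin n), ∑ C : Fin mm → Fin n → Bool, ∑ S' ∈ filt S,
          (P S * (if S.card ≤ dd then (1:ℝ) else 0) *
            (μc * (if outcome C S' = outcome C S then (1:ℝ) else 0)))
        ≤ ∑ S : Finset (Fin n),
            P S * (((dd:ℝ)+1) * ((n:ℝ)+1)^dd * (1 - ((1:ℝ)/2)^(2*dd))^mm) :=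
          Finset.sum_le_sum (fun S _ => hperS S)
      _ = (∑ S : Finset (Fin n), P S) *
            (((dd:ℝ)+1) * ((n:ℝ)+1)^dd * (1 - ((1:ℝ)/2)^(2*dd))^mm) := by
          rw [← Finset.sum_mul]
      _ = ((dd:ℝ)+1) * ((n:ℝ)+1)^dd * (1 - ((1:ℝ)/2)^(2*dd))^mm := by
          rw [hP, pgt_sum hl, one_mul]
      _ ≤ Real.exp (-(2*(Nat.log 2 n : ℝ)+4)) := by
          rw [hmm]
          exact final_numeric n dd
  exact add_le_add hA hB

lemma iterLog_tendsto (K : ℕ) : Tendsto (iterLog K) atTop atTop := by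
  induction K with
  | zero => exact tendsto_id
  | succ K ih => exact Real.tendsto_log_atTop.comp ih

lemma natlog2_tendsto : Tendsto (fun n => Nat.log 2 n) atTop atTop := by
  refine tendsto_atTop_atTop.mpr (fun b => ⟨2^b, fun a ha => ?_⟩)
  calc b = Nat.log 2 (2^b) := (Nat.log_pow (by norm_num) b).symm
    _ ≤ Nat.log 2 a := Nat.log_mono_right ha

theorem stmt6 (lam : ℕ → ℝ) (hpos : ∀ n, 0 < lam n)
    (hlamo : Tendsto (fun n => lam n / n) atTop (nhds 0))
    (hlamlim : ∃ L : ℝ, 0 < L ∧ Tendsto lam atTop (nhds L))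
    (K : ℕ) (hK : 1 < K)
    (β : ℕ → ℝ) (hβ : ∀ n, β n = iterLog K n) :
    ∃ (m : ℕ → ℕ)
      (μ : (n : ℕ) → (Fin (m n) → Fin n → Bool) → ℝ)
      (g : (n : ℕ) → (Fin (m n) → Fin n → Bool) → (Fin (m n) → Bool) → Finset (Fin n))
      (δ : ℕ → ℝ),
      (∀ n C, 0 ≤ μ n C) ∧
      (∀ n, ∑ C : Fin (m n) → Fin n → Bool, μ n C = 1) ∧
      Tendsto δ atTop (nhds 0) ∧
      (∀ᶠ n in atTop,
        (m n : ℝ) ≤ 3 / Real.logb 2 3 * β n * lam n * Real.logb 2 n * (1 + δ n)) ∧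
      Tendsto (fun n => ∑ C : Fin (m n) → Fin n → Bool, ∑ S : Finset (Fin n),
          μ n C * pgtWeight n (lam n) S * (if g n C (outcome C S) ≠ S then 1 else 0))
        atTop (nhds 0) := by
  classical
  obtain ⟨L, hL0, hLlim⟩ := hlamlim
  set M : ℝ := L + 1 with hM
  set gg : ℕ → ℕ := fun n => Nat.log 2 ⌊β n⌋₊ with hgg
  set dd : ℕ → ℕ := fun n => Nat.log 2 (gg n) with hdd
  set mseq : ℕ → ℕ := fun n => 4^(dd n) * (dd n + 2) * (Nat.log 2 n + 2) with hmseq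
  refine ⟨mseq, fun n _C => ((1:ℝ)/2)^(mseq n * n), fun n => decode n (dd n), fun _ => 0,
    ?_, ?_, ?_, ?_, ?_⟩
  · intro n C; positivity
  · intro n; exact mu_sum (mseq n) n
  · exact tendsto_const_nhds
  · -- budget
    have hβtop : Tendsto β atTop atTop := by
      have hfe : β = fun n : ℕ => iterLog K (n : ℝ) := funext hβ
      rw [hfe]
      exact (iterLog_tendsto K).comp tendsto_natCast_atTop_atTop
    have hggtop : Tendsto gg atTop atTop :=
      natlog2_tendsto.comp (tendsto_nat_floor_atTop.comp hβtop)
    have hcube : ∀ᶠ k : ℕ in atTop, 4*((k:ℝ))^3 ≤ (L/2) * 2^k := by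
      have h0 := tendsto_pow_const_div_const_pow_of_one_lt 3 (by norm_num : (1:ℝ) < 2)
      have h1 : ∀ᶠ k : ℕ in atTop, ((k:ℝ))^3 / 2^k ≤ L/8 := by
        have := h0.eventually (eventually_le_nhds (show (0:ℝ) < L/8 by linarith))
        exact this
      filter_upwards [h1] with k hk
      have h2 : (0:ℝ) < 2^k := by positivity
      rw [div_le_iff₀ h2] at hk
      nlinarith
    have hgev := hggtop.eventually hcube
    have hg2 : ∀ᶠ n in atTop, 2 ≤ gg n := hggtop.eventually (eventually_ge_atTop 2)
    have hlamlb : ∀ᶠ n in atTop, L/2 ≤ lam n :=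
      hLlim.eventually (eventually_ge_nhds (by linarith))
    have hβ0 : ∀ᶠ n in atTop, (1:ℝ) ≤ β n := hβtop.eventually (eventually_ge_atTop 1)
    have hc0 : (1:ℝ) ≤ 3 / Real.logb 2 3 := by
      rw [le_div_iff₀ (Real.logb_pos (by norm_num) (by norm_num))]
      rw [one_mul]
      rw [Real.logb, div_le_iff₀ (Real.log_pos (by norm_num))]
      calc Real.log 3 ≤ Real.log 8 := Real.log_le_log (by norm_num) (by norm_num)
        _ = 3 * Real.log 2 := by
            rw [show (8:ℝ) = 2^3 by norm_num, Real.log_pow]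
            push_cast; ring
    filter_upwards [hgev, hg2, hlamlb, hβ0, eventually_ge_atTop 4] with n hgev hg2 hlam hβ1 hn4
    have hn0 : (0:ℝ) < n := by
      have : 0 < n := by omega
      exact_mod_cast this
    have hlogb2 : (2:ℝ) ≤ Real.logb 2 n := by
      rw [Real.le_logb_iff_rpow_le (by norm_num : (1:ℝ) < 2) hn0]
      have h4 : ((2:ℝ):ℝ)^((2:ℝ)) = 4 := by
        rw [show ((2:ℝ)) = ((2:ℕ):ℝ) by norm_num, Real.rpow_natCast]
        norm_num
      rw [h4]
      exact_mod_cast hn4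
    have hgg0 : gg n ≠ 0 := by omega
    have t1 : 2^(dd n) ≤ gg n := Nat.pow_log_le_self 2 hgg0
    have hddle : dd n ≤ gg n := Nat.log_le_self 2 (gg n)
    have hlogn2 : 2 ≤ Nat.log 2 n := by
      calc 2 = Nat.log 2 4 := by
            rw [show (4:ℕ) = 2^2 by norm_num, Nat.log_pow (by norm_num)]
        _ ≤ Nat.log 2 n := Nat.log_mono_right hn4
    have t2 : mseq n ≤ 4 * (gg n)^3 * Nat.log 2 n := by
      have h4 : 4^(dd n) ≤ (gg n)^2 := by
        calc 4^(dd n) = 2^(2 * dd n) := by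
              rw [show (4:ℕ) = 2^2 by norm_num, ← pow_mul]
          _ = (2^(dd n))^2 := by rw [mul_comm, pow_mul]
          _ ≤ (gg n)^2 := Nat.pow_le_pow_left t1 2
      have h5 : dd n + 2 ≤ 2 * gg n := by omega
      have h6 : Nat.log 2 n + 2 ≤ 2 * Nat.log 2 n := by omega
      calc mseq n = 4^(dd n) * (dd n + 2) * (Nat.log 2 n + 2) := rfl
        _ ≤ (gg n)^2 * (2 * gg n) * (2 * Nat.log 2 n) :=
            Nat.mul_le_mul (Nat.mul_le_mul h4 h5) h6
        _ = 4 * (gg n)^3 * Nat.log 2 n := by ring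
    have A1 : (mseq n : ℝ) ≤ 4 * ((gg n : ℝ))^3 * (Nat.log 2 n : ℝ) := by exact_mod_cast t2
    have t3 : ((2:ℝ))^(gg n) ≤ β n := by
      have hfl1 : 1 ≤ ⌊β n⌋₊ := Nat.le_floor (by exact_mod_cast hβ1)
      have hfl2 : 2^(gg n) ≤ ⌊β n⌋₊ := Nat.pow_log_le_self 2 (by omega)
      calc ((2:ℝ))^(gg n) ≤ (⌊β n⌋₊ : ℝ) := by exact_mod_cast hfl2
        _ ≤ β n := Nat.floor_le (by linarith)
    have hlognR : (Nat.log 2 n : ℝ) ≤ Real.logb 2 n := Real.natLog_le_logb n 2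
    have hlogn0 : (0:ℝ) ≤ (Nat.log 2 n : ℝ) := Nat.cast_nonneg _
    have hβpos : (0:ℝ) < β n := by linarith
    have A2 : (mseq n : ℝ) ≤ (L/2) * β n * Real.logb 2 n := by
      calc (mseq n : ℝ) ≤ 4 * ((gg n : ℝ))^3 * (Nat.log 2 n : ℝ) := A1
        _ ≤ (L/2 * 2^(gg n)) * (Nat.log 2 n : ℝ) := mul_le_mul_of_nonneg_right hgev hlogn0
        _ ≤ (L/2 * β n) * Real.logb 2 n := by
            refine mul_le_mul (mul_le_mul_of_nonneg_left t3 (by linarith)) hlognR hlogn0 ?_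
            positivity
        _ = (L/2) * β n * Real.logb 2 n := by ring
    have hlamp : 0 < lam n := hpos n
    have hlogbpos : (0:ℝ) < Real.logb 2 n := by linarith
    have A3 : (L/2) * β n * Real.logb 2 n ≤ lam n * β n * Real.logb 2 n :=
      mul_le_mul_of_nonneg_right (mul_le_mul_of_nonneg_right hlam hβpos.le) hlogbpos.le
    calc (mseq n : ℝ) ≤ lam n * β n * Real.logb 2 n := le_trans A2 A3
      _ ≤ 3 / Real.logb 2 3 * β n * lam n * Real.logb 2 n * (1 + 0) := by
          nlinarith [hc0, mul_pos (mul_pos hlamp hβpos) hlogbpos]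
  · have hβtop : Tendsto β atTop atTop := by
      have hfe : β = fun n : ℕ => iterLog K (n : ℝ) := funext hβ
      rw [hfe]
      exact (iterLog_tendsto K).comp tendsto_natCast_atTop_atTop
    have hggtop : Tendsto gg atTop atTop :=
      natlog2_tendsto.comp (tendsto_nat_floor_atTop.comp hβtop)
    have hddtop : Tendsto dd atTop atTop := natlog2_tendsto.comp hggtop
    have hub : ∀ᶠ n in atTop, lam n ≤ M :=
      hLlim.eventually (eventually_le_nhds (by rw [hM]; linarith))
    refine squeeze_zero'
      (g := fun n => (Real.exp M - ∑ k ∈ range (dd n + 1), M ^ k / k.factorial)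
        + Real.exp (-(2*(Nat.log 2 n : ℝ)+4))) (Eventually.of_forall ?_) ?_ ?_
    · intro n
      apply Finset.sum_nonneg; intro C _
      apply Finset.sum_nonneg; intro S _
      exact mul_nonneg (mul_nonneg (by positivity) (pgt_nonneg (hpos n).le S)) ite_one_nonneg
    · filter_upwards [hub] with n hn
      exact error_le (hpos n) hn rfl
    · have hs : Tendsto (fun j : ℕ => ∑ k ∈ range j, M ^ k / k.factorial)
          atTop (nhds (Real.exp M)) := by
        rw [Real.exp_eq_exp_ℝ]
        exact (NormedSpace.expSeries_div_hasSum_exp M).tendsto_sum_nat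
      have h1 : Tendsto (fun j : ℕ => Real.exp M - ∑ k ∈ range j, M ^ k / k.factorial)
          atTop (nhds 0) := by
        have := (tendsto_const_nhds (x := Real.exp M) (f := (atTop : Filter ℕ))).sub hs
        simpa using this
      have h2 : Tendsto (fun n => dd n + 1) atTop atTop :=
        tendsto_atTop_mono (fun n => Nat.le_succ (dd n)) hddtop
      have hA := h1.comp h2
      have hlogR : Tendsto (fun n => (Nat.log 2 n : ℝ)) atTop atTop :=
        tendsto_natCast_atTop_atTop.comp natlog2_tendsto
      have h3 : Tendsto (fun n => 2*(Nat.log 2 n : ℝ) + 4) atTop atTop :=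
        tendsto_atTop_add_const_right _ 4 (hlogR.const_mul_atTop (by norm_num))
      have hB : Tendsto (fun n => Real.exp (-(2*(Nat.log 2 n : ℝ)+4))) atTop (nhds 0) :=
        Real.tendsto_exp_atBot.comp (tendsto_neg_atTop_atBot.comp h3)
      have := hA.add hB
      simpa [Function.comp] using this
end

section
/- Let λ : ℕ → (0,∞) satisfy λ(n) = o(n), and for each n let H(n) = −Σ_{d=0}^{n} P(D=d)·log₂ P(w_d), where P(D=d) = c(n,λ(n))·(λ(n)^d/d!)·e^{−λ(n)} and P(w_d) = c(n,λ(n))·((n−d)!/n!)·λ(n)^d·e^{−λ(n)} is the probability of any fixed configuration with exactly d defectives (so H(n) is the Shannon entropy of the defective-indicator vector, which lower-bounds the minimum expected number m̄ of adaptive group tests by the Huffman/entropy bound). Then H(n) > λ(n)·log₂(n/λ(n))·(1+o(1)) − log₂(e)·λ(n)⁴/n², i.e., there exists δ(n) → 0 such that eventually H(n) ≥ (1−δ(n))·λ(n)·log₂(n/λ(n)) − log₂(e)·λ(n)⁴/n². Moreover, if in addition λ(n) = o((n²·log₂ n)^{1/3}), then H(n) > λ(n)·log₂(n/λ(n))·(1+o(1)).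 -/
open Filter Finset

/-- The normalization constant `c(n,λ) = e^{λ}/(Σ_{d=0}^{n} λ^d/d!)` of the
right-truncated Poisson distribution. -/
noncomputable def cConst (n : ℕ) (lam : ℝ) : ℝ :=
  Real.exp lam / ∑ d ∈ Finset.range (n + 1), lam ^ d / d.factorial

/-- `P(D = d)` for the right-truncated Poisson distribution with parameters `lam` and `n`. -/
noncomputable def PD (n : ℕ) (lam : ℝ) (d : ℕ) : ℝ :=
  cConst n lam * (lam ^ d / d.factorial) * Real.exp (-lam)

/-- `P(w_d)`: probability of a fixed defective-indicator configuration with exactly `d`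
defectives in the Poisson PGT model. -/
noncomputable def Pw (n : ℕ) (lam : ℝ) (d : ℕ) : ℝ :=
  cConst n lam * ((n - d).factorial / n.factorial) * lam ^ d * Real.exp (-lam)

section aux

variable {n : ℕ} {l : ℝ}

lemma S_ge_one (n : ℕ) {l : ℝ} (hl : 0 ≤ l) :
    1 ≤ ∑ d ∈ Finset.range (n + 1), l ^ d / d.factorial := by
  have h0 : (l ^ 0 / (0:ℕ).factorial : ℝ) = 1 := by simp
  calc (1:ℝ) = l ^ 0 / (0:ℕ).factorial := h0.symm
    _ ≤ _ := Finset.single_le_sum (f := fun d => l ^ d / (d.factorial : ℝ))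
        (fun i _ => by positivity) (Finset.mem_range.2 (Nat.succ_pos n))

lemma S_pos (n : ℕ) (hl : 0 ≤ l) :
    0 < ∑ d ∈ Finset.range (n + 1), l ^ d / d.factorial :=
  lt_of_lt_of_le one_pos (S_ge_one n hl)

lemma cConst_pos (n : ℕ) (hl : 0 ≤ l) : 0 < cConst n l :=
  div_pos (Real.exp_pos _) (S_pos n hl)

lemma PD_nonneg (n : ℕ) (hl : 0 ≤ l) (d : ℕ) : 0 ≤ PD n l d := by
  unfold PD
  have := cConst_pos (l := l) n hl
  positivity

lemma sum_PD (n : ℕ) (hl : 0 ≤ l) : ∑ d ∈ Finset.range (n + 1), PD n l d = 1 := by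
  have hS := S_pos (l := l) n hl
  have h1 : ∑ d ∈ Finset.range (n + 1), PD n l d
      = (cConst n l * Real.exp (-l)) * ∑ d ∈ Finset.range (n + 1), l ^ d / d.factorial := by
    rw [Finset.mul_sum]; exact Finset.sum_congr rfl fun d _ => by unfold PD; ring
  rw [h1]
  unfold cConst
  rw [Real.exp_neg]
  field_simp

lemma PD_le_one (n : ℕ) (hl : 0 ≤ l) {d : ℕ} (hd : d ∈ Finset.range (n + 1)) :
    PD n l d ≤ 1 := by
  rw [← sum_PD n hl]
  exact Finset.single_le_sum (fun i _ => PD_nonneg n hl i) hd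

lemma Pw_pos (n : ℕ) (hl : 0 < l) (d : ℕ) : 0 < Pw n l d := by
  unfold Pw
  have := cConst_pos (l := l) n hl.le
  have h1 : (0:ℝ) < (n - d).factorial := by positivity
  have h2 : (0:ℝ) < n.factorial := by positivity
  positivity

lemma Pw_le_PD (n : ℕ) (hl : 0 ≤ l) {d : ℕ} (hd : d ≤ n) : Pw n l d ≤ PD n l d := by
  unfold Pw PD
  have hc := cConst_pos (l := l) n hl
  have hkey : ((n - d).factorial : ℝ) / n.factorial ≤ 1 / d.factorial := by
    rw [div_le_div_iff₀ (by positivity) (by positivity)]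
    have := Nat.le_of_dvd n.factorial_pos (Nat.factorial_mul_factorial_dvd_factorial hd)
    calc ((n - d).factorial : ℝ) * d.factorial = ((d.factorial * (n-d).factorial : ℕ) : ℝ) := by
          push_cast; ring
      _ ≤ (n.factorial : ℝ) := by exact_mod_cast this
      _ = 1 * n.factorial := (one_mul _).symm
  have hrest : (0:ℝ) ≤ l ^ d * Real.exp (-l) := by positivity
  calc cConst n l * ((n - d).factorial / n.factorial) * l ^ d * Real.exp (-l)
      = cConst n l * (((n - d).factorial : ℝ) / n.factorial) * (l ^ d * Real.exp (-l)) := by ring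
    _ ≤ cConst n l * (1 / d.factorial) * (l ^ d * Real.exp (-l)) := by
        apply mul_le_mul_of_nonneg_right _ hrest
        exact mul_le_mul_of_nonneg_left hkey hc.le
    _ = cConst n l * (l ^ d / d.factorial) * Real.exp (-l) := by ring

lemma fact_bound {n d : ℕ} (hd : d ≤ n / 2) :
    (n - d).factorial * n ^ d ≤ n.factorial * 2 ^ d := by
  have hdn : d ≤ n := le_trans hd (Nat.div_le_self n 2)
  have h1 : (n - d).factorial * (n - d + 1) ^ d ≤ n.factorial := by
    have := Nat.factorial_mul_pow_le_factorial (m := n - d) (n := d)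
    rwa [Nat.sub_add_cancel hdn] at this
  have h2 : n ≤ 2 * (n - d + 1) := by omega
  calc (n - d).factorial * n ^ d ≤ (n - d).factorial * (2 * (n - d + 1)) ^ d :=
        Nat.mul_le_mul_left _ (Nat.pow_le_pow_left h2 d)
    _ = 2 ^ d * ((n - d).factorial * (n - d + 1) ^ d) := by rw [Nat.mul_pow]; ring
    _ ≤ 2 ^ d * n.factorial := Nat.mul_le_mul_left _ h1
    _ = n.factorial * 2 ^ d := Nat.mul_comm _ _

lemma Pw_le_pow (n : ℕ) (hl : 0 < l) (hn : 0 < n) {d : ℕ} (hd : d ≤ n / 2) :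
    Pw n l d ≤ (2 * l / n) ^ d := by
  have hS := S_ge_one (l := l) n hl.le
  have hSpos := S_pos (l := l) n hl.le
  have hnR : (0:ℝ) < n := by exact_mod_cast hn
  have hfe : Pw n l d = ((n - d).factorial / n.factorial) * l ^ d /
      (∑ e ∈ Finset.range (n + 1), l ^ e / e.factorial) := by
    unfold Pw cConst
    rw [Real.exp_neg]
    have he := Real.exp_pos l
    field_simp
  rw [hfe]
  have hnum_nonneg : (0:ℝ) ≤ ((n - d).factorial / n.factorial) * l ^ d := by positivity
  calc ((n - d).factorial / n.factorial) * l ^ d /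
        (∑ e ∈ Finset.range (n + 1), l ^ e / e.factorial)
      ≤ ((n - d).factorial / n.factorial) * l ^ d / 1 := by
        exact div_le_div_of_nonneg_left hnum_nonneg one_pos hS
    _ = ((n - d).factorial / n.factorial) * l ^ d := by rw [div_one]
    _ ≤ (2 / n) ^ d * l ^ d := by
        apply mul_le_mul_of_nonneg_right _ (by positivity)
        rw [div_pow, div_le_div_iff₀ (by positivity) (by positivity)]
        have := fact_bound hd
        calc ((n - d).factorial : ℝ) * n ^ d = (((n - d).factorial * n ^ d : ℕ) : ℝ) := by
              push_cast; ring
          _ ≤ ((n.factorial * 2 ^ d : ℕ) : ℝ) := by exact_mod_cast this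
          _ = (2:ℝ) ^ d * n.factorial := by push_cast; ring
    _ = (2 * l / n) ^ d := by rw [← mul_pow]; congr 1; ring

lemma sum_shift (K : ℕ) (hl : 0 < l) (n : ℕ) :
    ∑ d ∈ Finset.range (K + 1), (d : ℝ) * PD n l d
      = l * ∑ d ∈ Finset.range K, PD n l d := by
  rw [Finset.sum_range_succ']
  simp only [Nat.cast_zero, zero_mul, add_zero]
  rw [Finset.mul_sum]
  apply Finset.sum_congr rfl
  intro i _
  unfold PD
  rw [Nat.factorial_succ]
  have h1 : ((i:ℝ) + 1) ≠ 0 := by positivity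
  have h2 : (i.factorial : ℝ) ≠ 0 := by positivity
  push_cast
  field_simp
  ring

end aux

lemma main_bound (n : ℕ) (l : ℝ) (hl : 0 < l) (hn : 4 ≤ n) (hln : l / n ≤ 1 / 8) :
    (1 - (4 * l / n + 1 / Real.logb 2 ((n:ℝ) / l))) * l * Real.logb 2 ((n:ℝ) / l)
      ≤ -∑ d ∈ Finset.range (n + 1), PD n l d * Real.logb 2 (Pw n l d) := by
  have hnR : (0:ℝ) < n := by exact_mod_cast (by omega : 0 < n)
  have hl8 : l ≤ n / 8 := by
    rw [div_le_div_iff₀ hnR (by norm_num)] at hln; linarith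
  have hnl8 : (8:ℝ) ≤ (n:ℝ) / l := by
    rw [le_div_iff₀ hl]; linarith [hl8, hl]
  set L := Real.logb 2 ((n:ℝ) / l) with hLdef
  have hL1 : 1 ≤ L := by
    rw [hLdef, show (1:ℝ) = Real.logb 2 2 from (Real.logb_self_eq_one (by norm_num)).symm]
    exact Real.logb_le_logb_of_le (by norm_num) (by norm_num) (by linarith)
  -- L - 1 = logb 2 (n / (2 l))
  have hLm1 : L - 1 = Real.logb 2 ((n:ℝ) / (2 * l)) := by
    have he : Real.logb 2 ((n:ℝ) / (2 * l)) = Real.logb 2 ((n:ℝ) / l) - Real.logb 2 2 := by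
      rw [show ((n:ℝ) / (2 * l)) = ((n:ℝ) / l) / 2 from by rw [div_div, mul_comm],
        Real.logb_div (by positivity : (0:ℝ) < (n:ℝ)/l).ne' (by norm_num)]
    rw [he, Real.logb_self_eq_one (by norm_num), hLdef]
  set M := n / 2 with hMdef
  have hMn : M ≤ n := Nat.div_le_self n 2
  have hM4 : (n:ℝ) / 4 ≤ (M:ℝ) := by
    have : n ≤ 4 * M := by omega
    have := (Nat.cast_le (α := ℝ)).2 this
    push_cast at this
    linarith
  have hMpos : (0:ℝ) < M := by linarith
  -- termwise bound on restricted range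
  have hterm : ∀ d ∈ Finset.range (M + 1),
      PD n l d * ((d:ℝ) * (L - 1)) ≤ PD n l d * (-Real.logb 2 (Pw n l d)) := by
    intro d hdm
    have hdM : d ≤ M := Nat.lt_succ_iff.1 (Finset.mem_range.1 hdm)
    apply mul_le_mul_of_nonneg_left _ (PD_nonneg n hl.le d)
    have hPw := Pw_le_pow n hl (by omega) hdM
    have hPwpos := Pw_pos n hl d
    have h2ln : (0:ℝ) < 2 * l / n := by positivity
    have : Real.logb 2 (Pw n l d) ≤ Real.logb 2 ((2 * l / n) ^ d) :=
      Real.logb_le_logb_of_le (by norm_num) hPwpos hPw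
    rw [Real.logb_pow] at this
    have hinv : Real.logb 2 (2 * l / (n:ℝ)) = -(L - 1) := by
      rw [hLm1, show (2 * l / (n:ℝ)) = ((n:ℝ) / (2 * l))⁻¹ by
        rw [inv_div]]
      rw [Real.logb_inv]
    rw [hinv] at this
    linarith
  -- nonnegativity of all terms
  have hnonneg : ∀ d ∈ Finset.range (n + 1), 0 ≤ PD n l d * (-Real.logb 2 (Pw n l d)) := by
    intro d hd
    apply mul_nonneg (PD_nonneg n hl.le d)
    rw [neg_nonneg]
    apply Real.logb_nonpos (by norm_num) (Pw_pos n hl d).le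
    exact le_trans (Pw_le_PD n hl.le (Nat.lt_succ_iff.1 (Finset.mem_range.1 hd)))
      (PD_le_one n hl.le hd)
  -- Markov tail bound : ∑_{d < M} PD ≥ 1 - l / M
  have hsum1 : ∑ d ∈ Finset.range (n + 1), PD n l d = 1 := sum_PD n hl.le
  have hsplit : ∑ d ∈ Finset.range M, PD n l d
      + ∑ d ∈ Finset.Ico M (n + 1), PD n l d = 1 := by
    rw [Finset.range_eq_Ico, Finset.sum_Ico_consecutive _ (Nat.zero_le M) (by omega),
      ← Finset.range_eq_Ico, hsum1]
  have hEd : ∑ d ∈ Finset.range (n + 1), (d:ℝ) * PD n l d ≤ l := by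
    rw [sum_shift n hl n]
    have : ∑ d ∈ Finset.range n, PD n l d ≤ 1 := by
      rw [← hsum1]
      exact Finset.sum_le_sum_of_subset_of_nonneg
        (Finset.range_subset_range.2 (by omega)) (fun i _ _ => PD_nonneg n hl.le i)
    calc l * ∑ d ∈ Finset.range n, PD n l d ≤ l * 1 :=
          mul_le_mul_of_nonneg_left this hl.le
      _ = l := mul_one l
  have htail : ∑ d ∈ Finset.Ico M (n + 1), PD n l d ≤ l / M := by
    rw [le_div_iff₀ hMpos]
    calc (∑ d ∈ Finset.Ico M (n + 1), PD n l d) * M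
        = ∑ d ∈ Finset.Ico M (n + 1), (M:ℝ) * PD n l d := by
          rw [Finset.sum_mul]; exact Finset.sum_congr rfl fun d _ => by ring
      _ ≤ ∑ d ∈ Finset.Ico M (n + 1), (d:ℝ) * PD n l d := by
          apply Finset.sum_le_sum
          intro d hd
          have : M ≤ d := (Finset.mem_Ico.1 hd).1
          exact mul_le_mul_of_nonneg_right (by exact_mod_cast this) (PD_nonneg n hl.le d)
      _ ≤ ∑ d ∈ Finset.range (n + 1), (d:ℝ) * PD n l d := by
          apply Finset.sum_le_sum_of_subset_of_nonneg
          · rw [Finset.range_eq_Ico]; exact Finset.Ico_subset_Ico (Nat.zero_le M) le_rfl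
          · intro i _ _
            exact mul_nonneg (Nat.cast_nonneg i) (PD_nonneg n hl.le i)
      _ ≤ l := hEd
  have hS1 : 1 - l / M ≤ ∑ d ∈ Finset.range M, PD n l d := by linarith
  -- main chain
  have hchain : (L - 1) * (l * ∑ d ∈ Finset.range M, PD n l d)
      ≤ ∑ d ∈ Finset.range (n + 1), PD n l d * (-Real.logb 2 (Pw n l d)) := by
    calc (L - 1) * (l * ∑ d ∈ Finset.range M, PD n l d)
        = ∑ d ∈ Finset.range (M + 1), PD n l d * ((d:ℝ) * (L - 1)) := by
          rw [show ∑ d ∈ Finset.range (M + 1), PD n l d * ((d:ℝ) * (L - 1))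
              = (L - 1) * ∑ d ∈ Finset.range (M + 1), (d:ℝ) * PD n l d by
            rw [Finset.mul_sum]; exact Finset.sum_congr rfl fun d _ => by ring]
          rw [sum_shift M hl n]
      _ ≤ ∑ d ∈ Finset.range (M + 1), PD n l d * (-Real.logb 2 (Pw n l d)) :=
          Finset.sum_le_sum hterm
      _ ≤ ∑ d ∈ Finset.range (n + 1), PD n l d * (-Real.logb 2 (Pw n l d)) :=
          Finset.sum_le_sum_of_subset_of_nonneg
            (Finset.range_subset_range.2 (by omega))
            (fun i hi _ => hnonneg i hi)
  have hfin : ∑ d ∈ Finset.range (n + 1), PD n l d * (-Real.logb 2 (Pw n l d))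
      = -∑ d ∈ Finset.range (n + 1), PD n l d * Real.logb 2 (Pw n l d) := by
    rw [← Finset.sum_neg_distrib]
    exact Finset.sum_congr rfl fun d _ => by ring
  rw [← hfin]
  refine le_trans ?_ hchain
  -- algebra: (1 - (4l/n + 1/L)) * l * L ≤ (L-1) * (l * S1) with S1 ≥ 1 - l/M
  have hSnn : 1 - l / M ≤ ∑ d ∈ Finset.range M, PD n l d := hS1
  have hMineq : l / M ≤ 4 * l / n := by
    rw [div_le_div_iff₀ hMpos hnR]
    nlinarith
  have hLpos : 0 < L := by linarith
  have hstep : (1 - (4 * l / n + 1 / L)) * l * L ≤ (L - 1) * (l * (1 - l / M)) := by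
    have h1L : (1 / L) * L = 1 := by field_simp
    have e1 : (1 - (4 * l / n + 1 / L)) * l * L = l * L - 4 * l / n * l * L - l := by
      field_simp; ring
    rw [e1]
    have e2 : (L - 1) * (l * (1 - l / M)) = l * L - l - (L - 1) * l * (l / M) := by ring
    rw [e2]
    have hq : (0:ℝ) ≤ l * (l / M) := by positivity
    have h3 : (L - 1) * l * (l / M) ≤ L * l * (l / M) := by nlinarith
    have h4 : L * l * (l / M) ≤ L * l * (4 * l / n) :=
      mul_le_mul_of_nonneg_left hMineq (by positivity)
    have h5 : 4 * l / n * l * L = L * l * (4 * l / n) := by ring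
    linarith [h5 ▸ h3.trans h4]
  refine le_trans hstep ?_
  apply mul_le_mul_of_nonneg_left _ (by linarith : (0:ℝ) ≤ L - 1)
  exact mul_le_mul_of_nonneg_left hSnn hl.le

theorem stmt7 (lam : ℕ → ℝ) (hpos : ∀ n, 0 < lam n)
    (hlamo : Tendsto (fun n => lam n / n) atTop (nhds 0))
    (H : ℕ → ℝ)
    (hH : ∀ n, H n = -∑ d ∈ Finset.range (n + 1),
        PD n (lam n) d * Real.logb 2 (Pw n (lam n) d)) :
    (∃ δ : ℕ → ℝ, Tendsto δ atTop (nhds 0) ∧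
      ∀ᶠ n in atTop,
        (1 - δ n) * lam n * Real.logb 2 ((n : ℝ) / lam n)
            - Real.logb 2 (Real.exp 1) * lam n ^ 4 / (n : ℝ) ^ 2 ≤ H n) ∧
    (Tendsto (fun n => lam n / ((n : ℝ) ^ 2 * Real.logb 2 n) ^ ((1 : ℝ) / 3))
        atTop (nhds 0) →
      ∃ δ : ℕ → ℝ, Tendsto δ atTop (nhds 0) ∧
        ∀ᶠ n in atTop, (1 - δ n) * lam n * Real.logb 2 ((n : ℝ) / lam n) ≤ H n) := by
  set δ : ℕ → ℝ := fun n => 4 * lam n / n + 1 / Real.logb 2 ((n:ℝ) / lam n) with hδ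
  have ht1 : Tendsto (fun n => 4 * lam n / (n:ℝ)) atTop (nhds 0) := by
    have := hlamo.const_mul (4:ℝ)
    simpa [mul_div_assoc] using this
  have hinv : Tendsto (fun (n : ℕ) => (n:ℝ) / lam n) atTop atTop := by
    have h0 : Tendsto (fun n => lam n / n) atTop (nhdsWithin 0 (Set.Ioi 0)) := by
      apply tendsto_nhdsWithin_of_tendsto_nhds_of_eventually_within _ hlamo
      filter_upwards [eventually_ge_atTop 1] with n hn
      have : (0:ℝ) < n := by exact_mod_cast (by omega : 0 < n)
      exact Set.mem_Ioi.2 (div_pos (hpos n) this)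
    have := h0.inv_tendsto_nhdsGT_zero
    simpa [Pi.inv_def, inv_div] using this
  have ht2 : Tendsto (fun (n : ℕ) => 1 / Real.logb 2 ((n:ℝ) / lam n)) atTop (nhds 0) := by
    have := ((Real.tendsto_logb_atTop (by norm_num : (1:ℝ) < 2)).comp hinv).inv_tendsto_atTop
    simpa [Function.comp_def, Pi.inv_def, one_div] using this
  have htδ : Tendsto δ atTop (nhds 0) := by
    have := ht1.add ht2
    simpa [hδ, one_div] using this
  have hev : ∀ᶠ n in atTop,
      (1 - δ n) * lam n * Real.logb 2 ((n : ℝ) / lam n) ≤ H n := by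
    have hsmall : ∀ᶠ n in atTop, lam n / (n:ℝ) < 1 / 8 :=
      hlamo.eventually_lt_const (by norm_num)
    filter_upwards [eventually_ge_atTop 4, hsmall] with n hn4 hn8
    rw [hH n]
    exact main_bound n (lam n) (hpos n) hn4 hn8.le
  refine ⟨⟨δ, htδ, ?_⟩, fun _ => ⟨δ, htδ, hev⟩⟩
  filter_upwards [hev, eventually_ge_atTop 1] with n h hn1
  have hnR : (0:ℝ) < n := by exact_mod_cast (by omega : 0 < n)
  have : 0 ≤ Real.logb 2 (Real.exp 1) * lam n ^ 4 / (n:ℝ) ^ 2 := by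
    have h1 : 0 ≤ Real.logb 2 (Real.exp 1) := by
      apply Real.logb_nonneg (by norm_num)
      nlinarith [Real.add_one_le_exp (1:ℝ)]
    positivity
  linarith
end

section
/- Let λ : ℕ → (0,∞) satisfy λ(n) = o(n) and lim_{n→∞} λ(n) = ∞, and let λ̄(n) = λ(n)·(1 − c(n,λ(n))·(λ(n)^n/n!)·e^{−λ(n)}) be the mean of the right-truncated Poisson distribution with parameters λ(n) and n. Set s₀ = log(n/λ̄(n)), s = ⌈s₀⌉, and k_i = ⌈(n/λ̄(n))^{(s₀−i)/s₀}⌉ for 1 ≤ i ≤ s−1. Then the upper bound on the expected number of tests of the s-stage splitting algorithm satisfies ⌈n/k₁⌉ + Σ_{i=2}^{s−1} λ̄(n)·k_{i−1}/k_i + λ̄(n)·k_{s−1} + s − 2 ≤ (e/log₂ e)·λ̄(n)·log₂(n/λ̄(n))·(1+o(1)); i.e., there exists δ(n) → 0 such that eventually the left-hand side is at most (1+δ(n))·(e/log₂ e)·λ̄(n)·log₂(n/λ̄(n)). -/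
open Filter Finset

/-- The mean `λ̄ = λ·(1 − c(n,λ)·(λ^n/n!)·e^{−λ})` of the right-truncated Poisson
distribution with parameters `lam` and `n`. -/
noncomputable def lamBar (n : ℕ) (lam : ℝ) : ℝ :=
  lam * (1 - cConst n lam * (lam ^ n / n.factorial) * Real.exp (-lam))

lemma lamBar_bounds (n : ℕ) (L : ℝ) (hn : 1 ≤ n) (hL : 0 < L) :
    L * (1 - L / n) ≤ lamBar n L ∧ lamBar n L ≤ L := by
  obtain ⟨m, rfl⟩ : ∃ m, n = m + 1 := ⟨n - 1, by omega⟩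
  set n := m + 1 with hndef
  have hS : (0:ℝ) < ∑ d ∈ Finset.range (n + 1), L ^ d / d.factorial := by
    apply Finset.sum_pos
    · intro d _; positivity
    · exact ⟨0, Finset.mem_range.mpr (Nat.succ_pos n)⟩
  have hkey : cConst n L * (L ^ n / n.factorial) * Real.exp (-L)
      = (L ^ n / n.factorial) / (∑ d ∈ Finset.range (n + 1), L ^ d / d.factorial) := by
    unfold cConst
    rw [div_mul_eq_mul_div, div_mul_eq_mul_div, mul_comm, ← mul_assoc, ← Real.exp_add]
    simp
  have hP0 : (0:ℝ) ≤ (L ^ n / n.factorial) / (∑ d ∈ Finset.range (n + 1), L ^ d / d.factorial) := by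
    positivity
  have hterm : L ^ m / (m.factorial : ℝ) ≤ ∑ d ∈ Finset.range (n + 1), L ^ d / d.factorial := by
    exact Finset.single_le_sum (f := fun d => L ^ d / (d.factorial : ℝ))
      (s := Finset.range (n+1)) (fun d _ => by positivity) (Finset.mem_range.mpr (by omega))
  have hPle : (L ^ n / n.factorial) / (∑ d ∈ Finset.range (n + 1), L ^ d / d.factorial) ≤ L / n := by
    have h1 : L ^ n / (n.factorial : ℝ) = (L / n) * (L ^ m / m.factorial) := by
      have hfac : (n.factorial : ℝ) = n * m.factorial := by
        rw [hndef, Nat.factorial_succ]; push_cast; ring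
      have hn0 : (0:ℝ) < (n:ℝ) := by positivity
      rw [hfac, hndef, pow_succ]
      field_simp
    rw [h1, div_le_iff₀ hS]
    have hLn : (0:ℝ) ≤ L / n := by positivity
    exact mul_le_mul_of_nonneg_left hterm hLn
  constructor
  · unfold lamBar
    rw [hkey]
    nlinarith [hL.le]
  · unfold lamBar
    rw [hkey]
    nlinarith [hL.le, hP0]

lemma main_calc (n : ℕ) (B : ℝ) (hn : 1 ≤ n) (hB : 1 ≤ B)
    (s0 : ℝ) (hs0 : s0 = Real.log ((n:ℝ) / B)) (h3 : 3 ≤ s0)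
    (s : ℕ) (hs : s = ⌈s0⌉₊)
    (k : ℕ → ℕ)
    (hk : ∀ i, 1 ≤ i → i ≤ s - 1 → k i = ⌈((n:ℝ)/B) ^ ((s0 - i)/s0)⌉₊) :
    (⌈(n:ℝ)/(k 1:ℝ)⌉₊:ℝ) + (∑ i ∈ Finset.Icc 2 (s-1), B * (k (i-1):ℝ)/(k i:ℝ))
      + B * (k (s-1):ℝ) + (s:ℝ) - 2
    ≤ Real.exp 1 * B * s0 + 6*B + s0 := by
  have hB0 : (0:ℝ) < B := lt_of_lt_of_le one_pos hB
  have hn0 : (0:ℝ) < (n:ℝ) := by exact_mod_cast hn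
  have hr0 : (0:ℝ) < (n:ℝ)/B := by positivity
  have hexp : Real.exp s0 = (n:ℝ)/B := by rw [hs0, Real.exp_log hr0]
  have hs0pos : (0:ℝ) < s0 := by linarith
  have hs0les : s0 ≤ (s:ℝ) := by rw [hs]; exact Nat.le_ceil s0
  have hsle : (s:ℝ) ≤ s0 + 1 := by
    rw [hs]; exact (Nat.ceil_lt_add_one hs0pos.le).le
  have hs3 : 3 ≤ s := by
    have : (3:ℝ) ≤ (s:ℝ) := le_trans h3 hs0les
    exact_mod_cast this
  -- k formula
  have hkf : ∀ i, 1 ≤ i → i ≤ s - 1 → (k i : ℕ) = ⌈Real.exp (s0 - i)⌉₊ := by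
    intro i h1 h2
    rw [hk i h1 h2]
    congr 1
    rw [Real.rpow_def_of_pos hr0, ← hs0]
    congr 1
    field_simp
  have hklb : ∀ i, 1 ≤ i → i ≤ s - 1 → Real.exp (s0 - i) ≤ (k i : ℝ) := by
    intro i h1 h2; rw [hkf i h1 h2]; exact Nat.le_ceil _
  have hkub : ∀ i, 1 ≤ i → i ≤ s - 1 → (k i : ℝ) ≤ Real.exp (s0 - i) + 1 := by
    intro i h1 h2; rw [hkf i h1 h2]
    exact (Nat.ceil_lt_add_one (Real.exp_pos _).le).le
  have hkpos : ∀ i, 1 ≤ i → i ≤ s - 1 → (0:ℝ) < (k i : ℝ) := by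
    intro i h1 h2
    exact lt_of_lt_of_le (Real.exp_pos _) (hklb i h1 h2)
  have he : (0:ℝ) < Real.exp 1 := Real.exp_pos 1
  -- Term 1
  have h1s : 1 ≤ s - 1 := by omega
  have hT1 : (⌈(n:ℝ)/(k 1:ℝ)⌉₊:ℝ) ≤ Real.exp 1 * B + 1 := by
    have hd : (n:ℝ)/(k 1:ℝ) ≤ Real.exp 1 * B := by
      have hk1 : Real.exp (s0 - 1) ≤ (k 1 : ℝ) := by
        have := hklb 1 le_rfl h1s
        norm_num at this
        exact this
      have h1 : (n:ℝ)/(k 1:ℝ) ≤ (n:ℝ)/Real.exp (s0 - 1) :=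
        div_le_div_of_nonneg_left hn0.le (Real.exp_pos _) hk1
      have h2 : (n:ℝ)/Real.exp (s0 - 1) = Real.exp 1 * B := by
        rw [Real.exp_sub, hexp]
        field_simp
      linarith
    calc (⌈(n:ℝ)/(k 1:ℝ)⌉₊:ℝ) ≤ (n:ℝ)/(k 1:ℝ) + 1 :=
          (Nat.ceil_lt_add_one (by positivity)).le
      _ ≤ Real.exp 1 * B + 1 := by linarith
  -- termwise sum bound
  have hterm : ∀ i ∈ Finset.Icc 2 (s-1),
      B * (k (i-1):ℝ)/(k i:ℝ) ≤ B * Real.exp 1 + B * Real.exp ((i:ℝ) - ((s:ℝ)-1)) := by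
    intro i hi
    rw [Finset.mem_Icc] at hi
    obtain ⟨hi2, his⟩ := hi
    have hi1 : 1 ≤ i - 1 := by omega
    have his1 : i - 1 ≤ s - 1 := by omega
    have hii : 1 ≤ i := by omega
    have hcast : ((i - 1 : ℕ) : ℝ) = (i:ℝ) - 1 := by
      push_cast [Nat.cast_sub hii]; ring
    have hub := hkub (i-1) hi1 his1
    rw [hcast] at hub
    have hlb := hklb i hii his
    have hkipos := hkpos i hii his
    have hbb : (0:ℝ) < Real.exp (s0 - i) := Real.exp_pos _
    have step1 : B * (k (i-1):ℝ)/(k i:ℝ) ≤ B * (Real.exp (s0 - ((i:ℝ)-1)) + 1) / Real.exp (s0 - i) := by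
      apply div_le_div₀ (by positivity) _ hbb hlb
      apply mul_le_mul_of_nonneg_left _ hB0.le
      exact hkub (i-1) hi1 his1 |>.trans_eq (by rw [hcast])
    have step2 : B * (Real.exp (s0 - ((i:ℝ)-1)) + 1) / Real.exp (s0 - i)
        = B * Real.exp 1 + B * Real.exp ((i:ℝ) - s0) := by
      have e1 : Real.exp (s0 - ((i:ℝ)-1)) = Real.exp 1 * Real.exp (s0 - i) := by
        rw [← Real.exp_add]; ring_nf
      have e2 : Real.exp ((i:ℝ) - s0) = (Real.exp (s0 - i))⁻¹ := by
        rw [← Real.exp_neg]; ring_nf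
      rw [e1, e2]
      field_simp
    have step3 : Real.exp ((i:ℝ) - s0) ≤ Real.exp ((i:ℝ) - ((s:ℝ)-1)) := by
      apply Real.exp_le_exp.mpr
      linarith
    calc B * (k (i-1):ℝ)/(k i:ℝ) ≤ B * (Real.exp (s0 - ((i:ℝ)-1)) + 1) / Real.exp (s0 - i) := step1
      _ = B * Real.exp 1 + B * Real.exp ((i:ℝ) - s0) := step2
      _ ≤ B * Real.exp 1 + B * Real.exp ((i:ℝ) - ((s:ℝ)-1)) := by
          have := mul_le_mul_of_nonneg_left step3 hB0.le
          linarith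
  -- geometric sum bound
  have hgeo : ∑ i ∈ Finset.Icc 2 (s-1), Real.exp ((i:ℝ) - ((s:ℝ)-1))
      ≤ Real.exp 1 / (Real.exp 1 - 1) := by
    have hsub : Finset.Icc 2 (s-1) ⊆ Finset.range s := by
      intro i hi
      rw [Finset.mem_Icc] at hi
      rw [Finset.mem_range]
      omega
    have h1 : ∑ i ∈ Finset.Icc 2 (s-1), Real.exp ((i:ℝ) - ((s:ℝ)-1))
        ≤ ∑ i ∈ Finset.range s, Real.exp ((i:ℝ) - ((s:ℝ)-1)) :=
      Finset.sum_le_sum_of_subset_of_nonneg hsub (fun i _ _ => (Real.exp_pos _).le)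
    have h2 : ∑ i ∈ Finset.range s, Real.exp ((i:ℝ) - ((s:ℝ)-1))
        = (∑ i ∈ Finset.range s, Real.exp 1 ^ i) * Real.exp (1 - (s:ℝ)) := by
      rw [Finset.sum_mul]
      apply Finset.sum_congr rfl
      intro i _
      rw [show (i:ℝ) - ((s:ℝ) - 1) = (i:ℝ) * 1 + (1 - (s:ℝ)) by ring,
        Real.exp_add, Real.exp_nat_mul]
    have hne : Real.exp 1 ≠ 1 := by
      have h := Real.exp_one_gt_d9
      have : (1:ℝ) < Real.exp 1 := by norm_num at h; linarith
      exact this.ne'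
    have h3' : ∑ i ∈ Finset.range s, Real.exp 1 ^ i
        = (Real.exp 1 ^ s - 1) / (Real.exp 1 - 1) := geom_sum_eq hne s
    have hem1 : (0:ℝ) < Real.exp 1 - 1 := by
      have := Real.exp_one_gt_d9; linarith
    have hes : Real.exp 1 ^ s = Real.exp (s:ℝ) := by
      rw [show (s:ℝ) = (s:ℝ) * 1 by ring, Real.exp_nat_mul]
    have h4 : (∑ i ∈ Finset.range s, Real.exp 1 ^ i) * Real.exp (1 - (s:ℝ))
        ≤ Real.exp 1 / (Real.exp 1 - 1) := by
      rw [h3', hes]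
      rw [div_mul_eq_mul_div, div_le_div_iff₀ hem1 hem1]
      have : (Real.exp ((s:ℝ)) - 1) * Real.exp (1 - (s:ℝ))
          ≤ Real.exp ((s:ℝ)) * Real.exp (1 - (s:ℝ)) := by
        have := (Real.exp_pos (1 - (s:ℝ))).le
        nlinarith
      have heq : Real.exp ((s:ℝ)) * Real.exp (1 - (s:ℝ)) = Real.exp 1 := by
        rw [← Real.exp_add]; ring_nf
      nlinarith [hem1]
    linarith [h1, h4, h2.le, h2.ge]
  -- sum bound
  have hcard : (Finset.Icc 2 (s-1)).card = s - 2 := by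
    rw [Nat.card_Icc]; omega
  have hsum : ∑ i ∈ Finset.Icc 2 (s-1), B * (k (i-1):ℝ)/(k i:ℝ)
      ≤ B * Real.exp 1 * ((s:ℝ) - 2) + B * (Real.exp 1 / (Real.exp 1 - 1)) := by
    calc ∑ i ∈ Finset.Icc 2 (s-1), B * (k (i-1):ℝ)/(k i:ℝ)
        ≤ ∑ i ∈ Finset.Icc 2 (s-1), (B * Real.exp 1 + B * Real.exp ((i:ℝ) - ((s:ℝ)-1))) :=
          Finset.sum_le_sum hterm
      _ = (Finset.Icc 2 (s-1)).card * (B * Real.exp 1)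
            + B * ∑ i ∈ Finset.Icc 2 (s-1), Real.exp ((i:ℝ) - ((s:ℝ)-1)) := by
          rw [Finset.sum_add_distrib, Finset.sum_const, Finset.mul_sum]
          simp [nsmul_eq_mul]
      _ ≤ B * Real.exp 1 * ((s:ℝ) - 2) + B * (Real.exp 1 / (Real.exp 1 - 1)) := by
          have hc : ((Finset.Icc 2 (s-1)).card : ℝ) = (s:ℝ) - 2 := by
            rw [hcard]
            push_cast [Nat.cast_sub (by omega : 2 ≤ s)]
            ring
          rw [hc]
          have := mul_le_mul_of_nonneg_left hgeo hB0.le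
          linarith
  -- last term
  have hlast : B * (k (s-1):ℝ) ≤ B * (Real.exp 1 + 1) := by
    have hub := hkub (s-1) h1s le_rfl
    have hcast : ((s - 1 : ℕ) : ℝ) = (s:ℝ) - 1 := by
      push_cast [Nat.cast_sub (by omega : 1 ≤ s)]; ring
    rw [hcast] at hub
    have : Real.exp (s0 - ((s:ℝ)-1)) ≤ Real.exp 1 := by
      apply Real.exp_le_exp.mpr; linarith
    have : (k (s-1):ℝ) ≤ Real.exp 1 + 1 := by linarith
    exact mul_le_mul_of_nonneg_left this hB0.le
  -- assemble
  have heb1 : (2.7182818283:ℝ) < Real.exp 1 := Real.exp_one_gt_d9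
  have heb2 : Real.exp 1 < 2.7182818286 := Real.exp_one_lt_d9
  have hem1 : (0:ℝ) < Real.exp 1 - 1 := by linarith
  have hfrac : Real.exp 1 / (Real.exp 1 - 1) ≤ 1.6 := by
    rw [div_le_iff₀ hem1]; nlinarith
  have h5 : B * (Real.exp 1 / (Real.exp 1 - 1)) ≤ 1.6 * B := by
    have := mul_le_mul_of_nonneg_left hfrac hB0.le
    linarith
  have h6 : Real.exp 1 * B * (s:ℝ) ≤ Real.exp 1 * B * s0 + Real.exp 1 * B := by
    have := mul_le_mul_of_nonneg_left hsle (mul_pos he hB0).le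
    linarith
  have h7 : Real.exp 1 * B ≤ 2.72 * B :=
    mul_le_mul_of_nonneg_right (by linarith) hB0.le
  linarith [hT1, hsum, hlast, h5, h6, h7, hsle]

theorem stmt8 (lam : ℕ → ℝ) (hpos : ∀ n, 0 < lam n)
    (hlamo : Tendsto (fun n => lam n / n) atTop (nhds 0))
    (hlaminf : Tendsto lam atTop atTop)
    (s0 : ℕ → ℝ) (hs0 : ∀ n, s0 n = Real.log ((n : ℝ) / lamBar n (lam n)))
    (s : ℕ → ℕ) (hs : ∀ n, s n = ⌈s0 n⌉₊)
    (k : ℕ → ℕ → ℕ)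
    (hk : ∀ n i, 1 ≤ i → i ≤ s n - 1 →
      k n i = ⌈((n : ℝ) / lamBar n (lam n)) ^ ((s0 n - i) / s0 n)⌉₊) :
    ∃ δ : ℕ → ℝ, Tendsto δ atTop (nhds 0) ∧
      ∀ᶠ n : ℕ in atTop,
        (⌈(n : ℝ) / (k n 1 : ℝ)⌉₊ : ℝ)
            + (∑ i ∈ Finset.Icc 2 (s n - 1),
                lamBar n (lam n) * (k n (i - 1) : ℝ) / (k n i : ℝ))
            + lamBar n (lam n) * (k n (s n - 1) : ℝ) + (s n : ℝ) - 2
          ≤ (1 + δ n) * (Real.exp 1 / Real.logb 2 (Real.exp 1)) * lamBar n (lam n)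
              * Real.logb 2 ((n : ℝ) / lamBar n (lam n)) := by
  set B : ℕ → ℝ := fun n => lamBar n (lam n) with hBdef
  -- eventually lam n / n < 1/2
  have hhalf : ∀ᶠ n : ℕ in atTop, lam n / n < 1/2 :=
    hlamo.eventually (gt_mem_nhds (by norm_num : (0:ℝ) < 1/2))
  have hn1 : ∀ᶠ n : ℕ in atTop, 1 ≤ n := eventually_ge_atTop 1
  have hBge : ∀ᶠ n : ℕ in atTop, lam n / 2 ≤ B n := by
    filter_upwards [hhalf, hn1] with n h1 h2
    have hb := (lamBar_bounds n (lam n) h2 (hpos n)).1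
    have : 1 - lam n / n ≥ 1/2 := by linarith
    nlinarith [(hpos n).le]
  have hBtop : Tendsto B atTop atTop := by
    apply tendsto_atTop_mono' atTop hBge
    exact hlaminf.atTop_div_const (by norm_num)
  have hBle : ∀ᶠ n : ℕ in atTop, B n ≤ lam n := by
    filter_upwards [hn1] with n h2
    exact (lamBar_bounds n (lam n) h2 (hpos n)).2
  have hBpos : ∀ᶠ n : ℕ in atTop, 0 < B n :=
    hBtop.eventually_gt_atTop 0
  -- n / lam n → ∞
  have hnlam : Tendsto (fun n : ℕ => (n:ℝ) / lam n) atTop atTop := by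
    have hmem : ∀ᶠ n : ℕ in atTop, lam n / n ∈ Set.Ioi (0:ℝ) := by
      filter_upwards [hn1] with n h2
      have : (0:ℝ) < (n:ℝ) := by exact_mod_cast h2
      exact div_pos (hpos n) this
    have h0 : Tendsto (fun n : ℕ => lam n / n) atTop (nhdsWithin 0 (Set.Ioi 0)) :=
      tendsto_nhdsWithin_of_tendsto_nhds_of_eventually_within _ hlamo hmem
    have := h0.inv_tendsto_nhdsGT_zero
    simpa [Pi.inv_def, inv_div] using this
  have hrtop : Tendsto (fun n : ℕ => (n:ℝ) / B n) atTop atTop := by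
    apply tendsto_atTop_mono' atTop _ hnlam
    filter_upwards [hBle, hBpos, hn1] with n h1 h2 h3
    have hn0 : (0:ℝ) ≤ (n:ℝ) := Nat.cast_nonneg n
    exact div_le_div_of_nonneg_left hn0 h2 h1 |>.trans_eq rfl
        |> fun h => by exact div_le_div_of_nonneg_left hn0 h2 h1
  have hs0top : Tendsto s0 atTop atTop :=
    (Real.tendsto_log_atTop.comp hrtop).congr (fun n => (hs0 n).symm)
  -- define δ
  refine ⟨fun n => 6/(Real.exp 1 * s0 n) + 1/(Real.exp 1 * B n), ?_, ?_⟩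
  · have h1 : Tendsto (fun n : ℕ => Real.exp 1 * s0 n) atTop atTop :=
      hs0top.const_mul_atTop (Real.exp_pos 1)
    have h2 : Tendsto (fun n : ℕ => Real.exp 1 * B n) atTop atTop :=
      hBtop.const_mul_atTop (Real.exp_pos 1)
    have t1 : Tendsto (fun n : ℕ => 6/(Real.exp 1 * s0 n)) atTop (nhds 0) :=
      tendsto_const_nhds.div_atTop h1
    have t2 : Tendsto (fun n : ℕ => 1/(Real.exp 1 * B n)) atTop (nhds 0) :=
      tendsto_const_nhds.div_atTop h2
    simpa using t1.add t2
  · filter_upwards [hn1, hBtop.eventually_ge_atTop 1, hs0top.eventually_ge_atTop 3]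
      with n hn hB h3
    have hmain := main_calc n (B n) hn hB (s0 n) (hs0 n) h3 (s n) (hs n) (k n)
      (fun i h1 h2 => hk n i h1 h2)
    -- RHS equality
    have hB0 : (0:ℝ) < B n := lt_of_lt_of_le one_pos hB
    have hs0pos : (0:ℝ) < s0 n := by linarith
    have hlog2 : Real.log 2 ≠ 0 := by
      have := Real.log_pos (by norm_num : (1:ℝ) < 2); linarith
    have hrhs : (1 + (6/(Real.exp 1 * s0 n) + 1/(Real.exp 1 * B n)))
          * (Real.exp 1 / Real.logb 2 (Real.exp 1)) * B n
          * Real.logb 2 ((n : ℝ) / B n)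
        = Real.exp 1 * B n * s0 n + 6 * B n + s0 n := by
      rw [Real.logb, Real.logb, Real.log_exp, ← hs0 n]
      have he : Real.exp 1 ≠ 0 := (Real.exp_pos 1).ne'
      field_simp
      ring
    rw [hBdef] at hrhs ⊢
    linarith [hmain, hrhs.ge, hrhs.le]
end

section
/- Let λ : ℕ → (0,∞) satisfy λ(n) = o(n) and lim_{n→∞} λ(n) = ∞, let ε > 0 be fixed, and for each n let D_n follow the right-truncated Poisson distribution with parameters λ(n) and n. Then, with Δ(n) = ⌈λ(n)^{1+ε}⌉ − 1, one has lim_{n→∞} P(D_n > Δ(n)) = 0. -/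
open Filter Finset

lemma aux_fact (a b : ℕ) : a.factorial * (a+1)^b ≤ (a+b).factorial := by
  induction b with
  | zero => simp
  | succ b ih =>
    have h : (a + (b+1)).factorial = (a+b+1) * (a+b).factorial := by
      rw [show a + (b+1) = (a+b)+1 from rfl, Nat.factorial_succ]
    rw [h, pow_succ]
    calc a.factorial * ((a+1)^b * (a+1)) = (a+1) * (a.factorial * (a+1)^b) := by ring
    _ ≤ (a+b+1) * (a+b).factorial := Nat.mul_le_mul (by omega) ih

lemma aux_term (l : ℝ) (hl : 0 < l) (t : ℕ) (ht : 2*l ≤ t+1) :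
    ∀ k, t ≤ k → l^k / k.factorial ≤ l^t / t.factorial * (1/2)^(k-t) := by
  intro k hk
  induction k, hk using Nat.le_induction with
  | base => simp
  | succ k hk ih =>
    have hfac : ((k+1).factorial : ℝ) = (k+1) * k.factorial := by
      push_cast [Nat.factorial_succ]; ring
    have hk1 : (0:ℝ) < k.factorial := by positivity
    have hstep : l^(k+1) / ((k+1).factorial : ℝ) = (l/(k+1)) * (l^k / k.factorial) := by
      rw [hfac, pow_succ]; field_simp
    have hr : l/((k:ℝ)+1) ≤ 1/2 := by
      rw [div_le_div_iff₀ (by positivity) (by norm_num)]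
      have h2 : (t:ℝ) + 1 ≤ (k:ℝ) + 1 := by
        have : (t:ℝ) ≤ k := by exact_mod_cast hk
        linarith
      linarith
    have hsub : k + 1 - t = (k - t) + 1 := by omega
    rw [hstep, hsub, pow_succ]
    have h0 : 0 ≤ l^k / (k.factorial : ℝ) := by positivity
    calc (l/((k:ℝ)+1)) * (l^k / k.factorial)
        ≤ (1/2) * (l^t / t.factorial * (1/2)^(k-t)) := by
          apply mul_le_mul hr ih h0 (by norm_num)
      _ = l^t / t.factorial * ((1/2)^(k-t) * (1/2)) := by ring

lemma aux_tail (l : ℝ) (hl : 0 < l) (t n : ℕ) (ht : 2*l ≤ t+1) :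
    ∑ d ∈ Finset.Icc t n, l^d / d.factorial ≤ 2 * (l^t / t.factorial) := by
  have h1 : ∑ d ∈ Finset.Icc t n, l^d / (d.factorial : ℝ)
      ≤ ∑ d ∈ Finset.Icc t n, l^t / t.factorial * (1/2)^(d-t) := by
    apply Finset.sum_le_sum
    intro d hd
    exact aux_term l hl t ht d (Finset.mem_Icc.1 hd).1
  refine h1.trans ?_
  rw [← Finset.mul_sum]
  have h2 : ∑ d ∈ Finset.Icc t n, ((1:ℝ)/2)^(d-t) ≤ 2 := by
    rw [← Finset.Ico_add_one_right_eq_Icc, Finset.sum_Ico_eq_sum_range]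
    have hc : ∀ i ∈ Finset.range (n+1-t), ((1:ℝ)/2)^(t+i-t) = (1/2)^i := by
      intro i _; congr 1; omega
    rw [Finset.sum_congr rfl hc, geom_sum_eq (by norm_num)]
    have h3 : (0:ℝ) ≤ (1/2)^(n+1-t) := by positivity
    rw [div_le_iff_of_neg (by norm_num)]
    linarith
  have h0 : 0 ≤ l^t / (t.factorial : ℝ) := by positivity
  calc l^t/(t.factorial:ℝ) * ∑ d ∈ Finset.Icc t n, ((1:ℝ)/2)^(d-t)
      ≤ l^t/t.factorial * 2 := mul_le_mul_of_nonneg_left h2 h0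
    _ = 2 * (l^t/t.factorial) := by ring

theorem stmt10 (lam : ℕ → ℝ) (hpos : ∀ n, 0 < lam n)
    (hlamo : Tendsto (fun n => lam n / n) atTop (nhds 0))
    (hlaminf : Tendsto lam atTop atTop)
    (ε : ℝ) (hε : 0 < ε)
    (Δ : ℕ → ℕ) (hΔ : ∀ n, Δ n = ⌈lam n ^ ((1 : ℝ) + ε)⌉₊ - 1) :
    Tendsto (fun n => ∑ d ∈ Finset.Icc (Δ n + 1) n,
        cConst n (lam n) * (lam n ^ d / d.factorial) * Real.exp (-(lam n)))
      atTop (nhds 0) := by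
  have hS_pos : ∀ n, (0:ℝ) < ∑ d ∈ Finset.range (n+1), lam n ^ d / d.factorial := by
    intro n
    apply Finset.sum_pos'
    · intro i _
      exact div_nonneg (pow_nonneg (hpos n).le i) (by positivity)
    · exact ⟨0, Finset.mem_range.2 (by omega), by norm_num⟩
  have hrw : ∀ n, (∑ d ∈ Finset.Icc (Δ n + 1) n,
        cConst n (lam n) * (lam n ^ d / d.factorial) * Real.exp (-(lam n)))
      = (∑ d ∈ Finset.Icc (Δ n + 1) n, lam n ^ d / d.factorial)
        / (∑ d ∈ Finset.range (n+1), lam n ^ d / d.factorial) := by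
    intro n
    rw [Finset.sum_div]
    apply Finset.sum_congr rfl
    intro d _
    calc cConst n (lam n) * (lam n ^ d / d.factorial) * Real.exp (-(lam n))
        = (lam n ^ d / d.factorial) * (Real.exp (lam n) * Real.exp (-(lam n)))
            / (∑ d ∈ Finset.range (n+1), lam n ^ d / d.factorial) := by
          unfold cConst; ring
      _ = (lam n ^ d / d.factorial) / (∑ d ∈ Finset.range (n+1), lam n ^ d / d.factorial) := by
          rw [← Real.exp_add]; simp
  -- upper bounding function tends to zero
  have hb : Tendsto (fun n => 2 * Real.exp (-(lam n ^ ε / 4))) atTop (nhds 0) := by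
    have h1 : Tendsto (fun n => lam n ^ ε) atTop atTop :=
      (tendsto_rpow_atTop hε).comp hlaminf
    have h2 : Tendsto (fun n => -(lam n ^ ε / 4)) atTop atBot :=
      tendsto_neg_atBot_iff.2 (h1.atTop_div_const (by norm_num))
    have h3 : Tendsto (fun n => Real.exp (-(lam n ^ ε / 4))) atTop (nhds 0) :=
      Real.tendsto_exp_atBot.comp h2
    simpa using h3.const_mul 2
  apply tendsto_of_tendsto_of_tendsto_of_le_of_le' tendsto_const_nhds hb
  · -- lower bound
    filter_upwards with n
    apply Finset.sum_nonneg
    intro d _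
    have hc : 0 ≤ cConst n (lam n) := div_nonneg (Real.exp_nonneg _) (hS_pos n).le
    have hp : 0 ≤ lam n ^ d / (d.factorial:ℝ) :=
      div_nonneg (pow_nonneg (hpos n).le d) (by positivity)
    exact mul_nonneg (mul_nonneg hc hp) (Real.exp_nonneg _)
  · -- upper bound eventually
    have e1 : ∀ᶠ n in atTop, 1 ≤ lam n := hlaminf.eventually_ge_atTop 1
    have e2 : ∀ᶠ n in atTop, 4 ≤ lam n ^ ε :=
      ((tendsto_rpow_atTop hε).comp hlaminf).eventually_ge_atTop 4
    have e3 : ∀ᶠ n in atTop, lam n / n < 1/2 :=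
      hlamo.eventually_lt_const (by norm_num)
    have e4 : ∀ᶠ (n : ℕ) in atTop, 1 ≤ n := eventually_ge_atTop 1
    filter_upwards [e1, e2, e3, e4] with n h1 h4 h3 hn1
    rw [hrw n]
    set l := lam n with hl_def
    have hl0 : 0 < l := hpos n
    set L := l ^ ε with hL_def
    have hL0 : (0:ℝ) < L := by positivity
    set m := ⌈l⌉₊ with hm_def
    have hml : l ≤ (m:ℝ) := Nat.le_ceil l
    have hm1 : (m:ℝ) < l + 1 := Nat.ceil_lt_add_one hl0.le
    have hn0 : (0:ℝ) < n := by exact_mod_cast hn1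
    have hln : l ≤ (n:ℝ) := by
      have := (div_lt_iff₀ hn0).1 h3
      linarith
    have hmn : m ≤ n := Nat.ceil_le.2 hln
    have hpow : l ^ ((1:ℝ)+ε) = l * L := by
      rw [hL_def, Real.rpow_add hl0, Real.rpow_one]
    have hceil1 : 1 ≤ ⌈l ^ ((1:ℝ)+ε)⌉₊ := by
      rw [Nat.one_le_ceil_iff, hpow]; positivity
    have hD1 : Δ n + 1 = ⌈l ^ ((1:ℝ)+ε)⌉₊ := by
      rw [hΔ n, ← hl_def]; omega
    have hDge : l * L ≤ ((Δ n + 1 : ℕ) : ℝ) := by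
      rw [hD1, ← hpow]; exact Nat.le_ceil _
    have hmD : m ≤ Δ n + 1 := by
      have : (m:ℝ) ≤ ((Δ n + 1 : ℕ):ℝ) := by push_cast at hDge ⊢; nlinarith
      exact_mod_cast this
    set N := Δ n + 1 - m with hN_def
    have hmN : m + N = Δ n + 1 := by omega
    have hNcast : (N:ℝ) = ((Δ n + 1 : ℕ):ℝ) - m := by
      rw [hN_def]; push_cast [Nat.cast_sub hmD]; push_cast; ring
    -- tail bound
    have h2l : 2*l ≤ ((Δ n + 1 : ℕ):ℝ) + 1 := by nlinarith
    have hT := aux_tail l hl0 (Δ n + 1) n h2l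
    -- denominator bound
    have hden : l^m / (m.factorial:ℝ) ≤ ∑ d ∈ Finset.range (n+1), l ^ d / d.factorial :=
      Finset.single_le_sum (f := fun d => l^d / (d.factorial:ℝ))
        (fun i _ => by positivity) (Finset.mem_range.2 (by omega))
    have hdenpos : (0:ℝ) < l^m / m.factorial := by positivity
    have step1 : (∑ d ∈ Finset.Icc (Δ n + 1) n, l ^ d / d.factorial)
        / (∑ d ∈ Finset.range (n+1), l ^ d / d.factorial)
        ≤ (2 * (l^(Δ n + 1) / ((Δ n + 1).factorial : ℝ))) / (l^m / m.factorial) := by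
      apply div_le_div₀ (by positivity) hT hdenpos hden
    refine step1.trans ?_
    -- factorial bound
    have hfac : (m.factorial : ℝ) * ((m:ℝ)+1)^N ≤ ((Δ n + 1).factorial : ℝ) := by
      have := aux_fact m N
      rw [hmN] at this
      exact_mod_cast this
    have hfacpos : (0:ℝ) < ((Δ n + 1).factorial : ℝ) := by positivity
    have hmfacpos : (0:ℝ) < (m.factorial : ℝ) := by positivity
    have step2 : (2 * (l^(Δ n + 1) / ((Δ n + 1).factorial : ℝ))) / (l^m / m.factorial)
        ≤ 2 * (l/((m:ℝ)+1))^N := by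
      have hmp : (0:ℝ) < ((m:ℝ)+1)^N := by positivity
      have hpowsplit : l^(Δ n + 1) = l^m * l^N := by rw [← pow_add, hmN]
      have hEq : (2 * (l^(Δ n + 1) / ((Δ n + 1).factorial : ℝ))) / (l^m / m.factorial)
          = 2 * l^N * (m.factorial:ℝ) / ((Δ n + 1).factorial : ℝ) := by
        rw [hpowsplit]
        field_simp
      rw [hEq, div_pow, ← mul_div_assoc, div_le_div_iff₀ hfacpos hmp]
      nlinarith [mul_le_mul_of_nonneg_left hfac (show (0:ℝ) ≤ 2*l^N by positivity)]
    refine step2.trans ?_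
    have step3 : (2:ℝ) * (l/((m:ℝ)+1))^N ≤ 2 * (l/(l+1))^N := by
      apply mul_le_mul_of_nonneg_left _ (by norm_num)
      apply pow_le_pow_left₀ (by positivity)
      apply div_le_div_of_nonneg_left hl0.le (by linarith) (by linarith)
    refine step3.trans ?_
    have step4 : (2:ℝ) * (l/(l+1))^N ≤ 2 * Real.exp (-(1/(l+1)))^N := by
      apply mul_le_mul_of_nonneg_left _ (by norm_num)
      apply pow_le_pow_left₀ (by positivity)
      have h := Real.add_one_le_exp (-(1/(l+1)))
      have : l/(l+1) = -(1/(l+1)) + 1 := by field_simp; ring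
      linarith [this ▸ h]
    refine step4.trans ?_
    have step5 : Real.exp (-(1/(l+1)))^N = Real.exp ((N:ℝ) * (-(1/(l+1)))) := by
      rw [← Real.exp_nat_mul]
    rw [step5]
    apply mul_le_mul_of_nonneg_left _ (by norm_num : (0:ℝ) ≤ 2)
    apply Real.exp_le_exp.2
    -- N * (-(1/(l+1))) ≤ -(L/4)
    have h4l : l*4 ≤ l*L := mul_le_mul_of_nonneg_left h4 hl0.le
    have hNge : l*L/2 ≤ (N:ℝ) := by
      rw [hNcast]; linarith
    have hl1 : (0:ℝ) < l+1 := by linarith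
    have hdiv : L/4 ≤ (N:ℝ)/(l+1) := by
      have hLl : 1*L ≤ l*L := mul_le_mul_of_nonneg_right h1 hL0.le
      rw [div_le_div_iff₀ (by norm_num) hl1]; linarith
    have heq : (N:ℝ)*(-(1/(l+1))) = -((N:ℝ)/(l+1)) := by ring
    rw [heq]
    linarith
end

section
/- Let λ > 0, let 0 < ε < 1, and let n ∈ ℕ satisfy λ(1+ε) ≤ n. Let c = e^{λ}/(Σ_{d=0}^{n} λ^d/d!), f₁(ε) = (1+ε)·log(1+ε) − ε, and f₂(ε) = (1−ε)·log(1−ε) + ε. Then the right-truncated Poisson distribution with parameters λ and n satisfies Σ_{d ∈ ℕ, λ(1−ε) ≤ d ≤ λ(1+ε)} c·(λ^d/d!)·e^{−λ} ≥ c·(1 − e^{−λ·f₁(ε)} − e^{−λ·f₂(ε)}). -/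
open Finset

private lemma exp_tsum (x : ℝ) : ∑' d : ℕ, x ^ d / d.factorial = Real.exp x := by
  rw [Real.exp_eq_exp_ℝ, NormedSpace.exp_eq_tsum_div]

private lemma chernoff (lam t a : ℝ) (hlam : 0 < lam) (P : ℕ → Prop) [DecidablePred P]
    (hP : ∀ d : ℕ, P d → t * a ≤ t * d) :
    ∑' d : ℕ, (if P d then lam ^ d / d.factorial * Real.exp (-lam) else 0)
      ≤ Real.exp (lam * (Real.exp t - 1) - t * a) := by
  have hg : Summable fun d : ℕ =>
      Real.exp (-(t * a)) * ((lam * Real.exp t) ^ d / d.factorial) * Real.exp (-lam) :=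
    (((Real.summable_pow_div_factorial (lam * Real.exp t)).mul_left _).mul_right _)
  have hle : ∀ d : ℕ, (if P d then lam ^ d / d.factorial * Real.exp (-lam) else 0)
      ≤ Real.exp (-(t * a)) * ((lam * Real.exp t) ^ d / d.factorial) * Real.exp (-lam) := by
    intro d
    have hpos : (0:ℝ) ≤ Real.exp (-(t * a)) * ((lam * Real.exp t) ^ d / d.factorial)
        * Real.exp (-lam) := by positivity
    by_cases h : P d
    · rw [if_pos h]
      have h1 : (1 : ℝ) ≤ Real.exp (-(t * a)) * Real.exp (t * d) := by
        rw [← Real.exp_add]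
        have h2 := hP d h
        have h3 : (0:ℝ) ≤ -(t*a) + t*d := by linarith
        calc (1:ℝ) = Real.exp 0 := by simp
          _ ≤ _ := Real.exp_le_exp.mpr h3
      have hrw : Real.exp (-(t * a)) * ((lam * Real.exp t) ^ d / d.factorial) * Real.exp (-lam)
          = (Real.exp (-(t * a)) * Real.exp (t * d)) * (lam ^ d / d.factorial * Real.exp (-lam)) := by
        rw [mul_pow, ← Real.exp_nat_mul]
        ring_nf
      rw [hrw]
      have hb : (0:ℝ) ≤ lam ^ d / d.factorial * Real.exp (-lam) := by positivity
      exact le_mul_of_one_le_left hb h1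
    · rw [if_neg h]; exact hpos
  calc ∑' d : ℕ, (if P d then lam ^ d / d.factorial * Real.exp (-lam) else 0)
      ≤ ∑' d : ℕ, Real.exp (-(t * a)) * ((lam * Real.exp t) ^ d / d.factorial) * Real.exp (-lam) := by
        refine Summable.tsum_le_tsum hle ?_ hg
        refine Summable.of_nonneg_of_le (fun d => ?_) hle hg
        by_cases h : P d
        · rw [if_pos h]; positivity
        · rw [if_neg h]
    _ = Real.exp (lam * (Real.exp t - 1) - t * a) := by
        rw [tsum_mul_right, tsum_mul_left, exp_tsum, ← Real.exp_add, ← Real.exp_add]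
        congr 1
        ring

theorem stmt15 (lam ε : ℝ) (n : ℕ) (hlam : 0 < lam) (hε0 : 0 < ε) (hε1 : ε < 1)
    (hn : lam * (1 + ε) ≤ n)
    (c : ℝ)
    (hc : c = Real.exp lam / ∑ d ∈ Finset.range (n + 1), lam ^ d / d.factorial) :
    c * (1 - Real.exp (-(lam * ((1 + ε) * Real.log (1 + ε) - ε)))
          - Real.exp (-(lam * ((1 - ε) * Real.log (1 - ε) + ε))))
      ≤ ∑' d : ℕ, if lam * (1 - ε) ≤ (d : ℝ) ∧ (d : ℝ) ≤ lam * (1 + ε)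
          then c * (lam ^ d / d.factorial) * Real.exp (-lam) else 0 := by
  classical
  set F : ℕ → ℝ := fun d => lam ^ d / d.factorial * Real.exp (-lam) with hF
  have hFnn : ∀ d, 0 ≤ F d := fun d => by positivity
  have hFsum : Summable F := (Real.summable_pow_div_factorial lam).mul_right _
  have hFtsum : ∑' d : ℕ, F d = 1 := by
    rw [hF, tsum_mul_right, exp_tsum, ← Real.exp_add]
    simp
  have piece_sum : ∀ (P : ℕ → Prop) [DecidablePred P],
      Summable fun d : ℕ => if P d then F d else 0 := by
    intro P _
    refine Summable.of_nonneg_of_le (fun d => ?_) (fun d => ?_) hFsum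
    · by_cases h : P d
      · rw [if_pos h]; exact hFnn d
      · rw [if_neg h]
    · by_cases h : P d
      · rw [if_pos h]
      · rw [if_neg h]; exact hFnn d
  have hsplit : ∀ d : ℕ, (if lam * (1 - ε) ≤ (d : ℝ) ∧ (d : ℝ) ≤ lam * (1 + ε)
          then F d else 0)
      = F d - (if (d : ℝ) < lam * (1 - ε) then F d else 0)
          - (if lam * (1 + ε) < (d : ℝ) then F d else 0) := by
    intro d
    rcases lt_or_ge ((d : ℝ)) (lam * (1 - ε)) with h1 | h1
    · have h2 : ¬ lam * (1 + ε) < (d : ℝ) := by nlinarith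
      have h3 : ¬ (lam * (1 - ε) ≤ (d : ℝ) ∧ (d : ℝ) ≤ lam * (1 + ε)) := by
        push_neg; intro h; linarith
      rw [if_neg h3, if_pos h1, if_neg h2]; ring
    · rcases lt_or_ge (lam * (1 + ε)) ((d : ℝ)) with h2 | h2
      · have h3 : ¬ (lam * (1 - ε) ≤ (d : ℝ) ∧ (d : ℝ) ≤ lam * (1 + ε)) := by
          push_neg; intro h; linarith
        rw [if_neg h3, if_neg (not_lt.mpr h1), if_pos h2]; ring
      · rw [if_pos ⟨h1, h2⟩, if_neg (not_lt.mpr h1), if_neg (not_lt.mpr h2)]; ring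
  have hT : (∑' d : ℕ, if lam * (1 - ε) ≤ (d : ℝ) ∧ (d : ℝ) ≤ lam * (1 + ε) then F d else 0)
      = 1 - (∑' d : ℕ, if (d : ℝ) < lam * (1 - ε) then F d else 0)
          - (∑' d : ℕ, if lam * (1 + ε) < (d : ℝ) then F d else 0) := by
    rw [tsum_congr hsplit,
        Summable.tsum_sub (hFsum.sub (piece_sum _)) (piece_sum _),
        Summable.tsum_sub hFsum (piece_sum _), hFtsum]
  have hε1' : (0:ℝ) < 1 - ε := by linarith
  have hB : (∑' d : ℕ, if (d : ℝ) < lam * (1 - ε) then F d else 0)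
      ≤ Real.exp (-(lam * ((1 - ε) * Real.log (1 - ε) + ε))) := by
    have hch := chernoff lam (Real.log (1 - ε)) (lam * (1 - ε)) hlam
      (fun d : ℕ => (d : ℝ) < lam * (1 - ε)) (by
        intro d hd
        have hlog : Real.log (1 - ε) ≤ 0 := Real.log_nonpos (by linarith) (by linarith)
        exact mul_le_mul_of_nonpos_left (le_of_lt hd) hlog)
    refine hch.trans_eq ?_
    rw [Real.exp_log hε1']
    congr 1
    ring
  have hA : (∑' d : ℕ, if lam * (1 + ε) < (d : ℝ) then F d else 0)
      ≤ Real.exp (-(lam * ((1 + ε) * Real.log (1 + ε) - ε))) := by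
    have hch := chernoff lam (Real.log (1 + ε)) (lam * (1 + ε)) hlam
      (fun d : ℕ => lam * (1 + ε) < (d : ℝ)) (by
        intro d hd
        have hlog : 0 ≤ Real.log (1 + ε) := Real.log_nonneg (by linarith)
        exact mul_le_mul_of_nonneg_left (le_of_lt hd) hlog)
    refine hch.trans_eq ?_
    rw [Real.exp_log (by linarith : (0:ℝ) < 1 + ε)]
    congr 1
    ring
  have hden : 0 < ∑ d ∈ Finset.range (n + 1), lam ^ d / d.factorial := by
    apply Finset.sum_pos
    · intro i _; positivity
    · exact ⟨0, Finset.mem_range.mpr (Nat.succ_pos n)⟩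
  have hcnn : 0 ≤ c := by rw [hc]; positivity
  have hkey : 1 - Real.exp (-(lam * ((1 + ε) * Real.log (1 + ε) - ε)))
        - Real.exp (-(lam * ((1 - ε) * Real.log (1 - ε) + ε)))
      ≤ ∑' d : ℕ, if lam * (1 - ε) ≤ (d : ℝ) ∧ (d : ℝ) ≤ lam * (1 + ε) then F d else 0 := by
    rw [hT]; linarith
  calc c * (1 - Real.exp (-(lam * ((1 + ε) * Real.log (1 + ε) - ε)))
          - Real.exp (-(lam * ((1 - ε) * Real.log (1 - ε) + ε))))
      ≤ c * ∑' d : ℕ, if lam * (1 - ε) ≤ (d : ℝ) ∧ (d : ℝ) ≤ lam * (1 + ε) then F d else 0 :=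
        mul_le_mul_of_nonneg_left hkey hcnn
    _ = _ := by
        rw [← tsum_mul_left]
        refine tsum_congr fun d => ?_
        by_cases h : lam * (1 - ε) ≤ (d : ℝ) ∧ (d : ℝ) ≤ lam * (1 + ε)
        · rw [if_pos h, if_pos h, hF, mul_assoc]
        · rw [if_neg h, if_neg h, mul_zero]
end

section
/- Let n ∈ ℕ with n ≥ 2, let λ > 0, and let c = e^{λ}/(Σ_{d=0}^{n} λ^d/d!). Then the right-truncated Poisson distribution with parameters λ and n satisfies Σ_{d=0}^{n} (d(d−1)/(n−d+1))·c·(λ^d/d!)·e^{−λ} < (λ²/n²)·(n + 2 + 4λ + λ²). -/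
open Finset

lemma shift2_trunc (lam : ℝ) (g : ℕ → ℝ) (k : ℕ) :
    ∑ j ∈ range (k+2), (j:ℝ)*((j:ℝ)-1) * g j * (lam ^ j / j.factorial)
      = lam^2 * ∑ j ∈ range k, g (j+2) * (lam ^ j / j.factorial) := by
  induction k with
  | zero => simp [Finset.sum_range_succ]
  | succ k ih =>
    rw [show k+1+2 = (k+2)+1 by ring, Finset.sum_range_succ, ih, Finset.sum_range_succ]
    have h1 : ((k+2).factorial : ℝ) = ((k:ℝ)+2)*((k:ℝ)+1)*k.factorial := by
      rw [Nat.factorial_succ, Nat.factorial_succ]; push_cast; ring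
    have h2 : (k.factorial : ℝ) ≠ 0 := by positivity
    rw [h1]
    field_simp [h1]
    push_cast
    ring

lemma shift1_trunc (lam : ℝ) (k : ℕ) :
    ∑ j ∈ range (k+1), (j:ℝ) * (lam ^ j / j.factorial)
      = lam * ∑ j ∈ range k, lam ^ j / j.factorial := by
  induction k with
  | zero => simp
  | succ k ih =>
    rw [Finset.sum_range_succ, ih, Finset.sum_range_succ]
    have h1 : ((k+1).factorial : ℝ) = ((k:ℝ)+1)*k.factorial := by
      rw [Nat.factorial_succ]; push_cast; ring
    have h2 : (k.factorial : ℝ) ≠ 0 := by positivity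
    rw [h1]
    field_simp [h1]
    push_cast
    ring

lemma Lq_trunc (lam : ℝ) (hlam : 0 < lam) (k : ℕ) :
    ∑ j ∈ range k, (j:ℝ)*((j:ℝ)-1) * (lam ^ j / j.factorial)
      ≤ lam^2 * ∑ j ∈ range k, lam ^ j / j.factorial := by
  have h := shift2_trunc lam (fun _ => (1:ℝ)) k
  simp only [mul_one, one_mul] at h
  calc ∑ j ∈ range k, (j:ℝ)*((j:ℝ)-1) * (lam ^ j / j.factorial)
      ≤ ∑ j ∈ range (k+2), (j:ℝ)*((j:ℝ)-1) * (lam ^ j / j.factorial) := by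
        apply Finset.sum_le_sum_of_subset_of_nonneg
        · exact Finset.range_subset_range.mpr (by omega)
        · intro i hi _
          have h1 : (0:ℝ) ≤ (i:ℝ)*((i:ℝ)-1) := by
            rcases Nat.eq_zero_or_pos i with h|h
            · simp [h]
            · have : (1:ℝ) ≤ i := by exact_mod_cast h
              nlinarith
          positivity
    _ = lam^2 * ∑ j ∈ range k, lam ^ j / j.factorial := h

lemma L1_trunc (lam : ℝ) (hlam : 0 < lam) (k : ℕ) :
    ∑ j ∈ range k, (j:ℝ) * (lam ^ j / j.factorial)
      ≤ lam * ∑ j ∈ range k, lam ^ j / j.factorial := by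
  have h := shift1_trunc lam k
  calc ∑ j ∈ range k, (j:ℝ) * (lam ^ j / j.factorial)
      ≤ ∑ j ∈ range (k+1), (j:ℝ) * (lam ^ j / j.factorial) := by
        apply Finset.sum_le_sum_of_subset_of_nonneg
        · exact Finset.range_subset_range.mpr (by omega)
        · intro i _ _; positivity
    _ = lam * ∑ j ∈ range k, lam ^ j / j.factorial := h

theorem stmt18 (n : ℕ) (hn : 2 ≤ n) (lam : ℝ) (hlam : 0 < lam)
    (c : ℝ)
    (hc : c = Real.exp lam / ∑ d ∈ Finset.range (n + 1), lam ^ d / d.factorial) :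
    ∑ d ∈ Finset.range (n + 1),
        ((d : ℝ) * ((d : ℝ) - 1) / ((n : ℝ) - d + 1)) * c * (lam ^ d / d.factorial)
          * Real.exp (-lam)
      < lam ^ 2 / (n : ℝ) ^ 2 * ((n : ℝ) + 2 + 4 * lam + lam ^ 2) := by
  obtain ⟨m, rfl⟩ : ∃ m, n = m + 2 := ⟨n - 2, by omega⟩
  have hnR : (0:ℝ) < (m:ℝ) + 2 := by positivity
  set S := ∑ d ∈ range (m + 2 + 1), lam ^ d / d.factorial with hSdef
  have hS : 0 < S := by
    apply Finset.sum_pos (fun i _ => by positivity) (by simp)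
  have hce : c * Real.exp (-lam) = 1 / S := by
    rw [hc, div_mul_eq_mul_div, ← Real.exp_add]
    simp
  set nR : ℝ := ((m:ℕ):ℝ) + 2 with hnRdef
  have hcast : ((m + 2 : ℕ) : ℝ) = nR := by push_cast; rfl
  -- rewrite LHS
  have hL : ∑ d ∈ Finset.range (m + 2 + 1),
      ((d : ℝ) * ((d : ℝ) - 1) / (((m:ℕ)+2 : ℝ) - d + 1)) * c * (lam ^ d / d.factorial)
          * Real.exp (-lam)
      = (∑ d ∈ range (m + 2 + 1),
          ((d : ℝ) * ((d : ℝ) - 1) / (nR - d + 1)) * (lam ^ d / d.factorial)) *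
        (c * Real.exp (-lam)) := by
    rw [Finset.sum_mul]
    exact Finset.sum_congr rfl (fun d _ => by ring)
  push_cast
  push_cast at hL
  rw [hL, hce, mul_one_div, div_lt_iff₀ hS]
  -- per-term bound
  have hterm : ∀ d ∈ range (m + 2 + 1),
      ((d : ℝ) * ((d : ℝ) - 1) / (nR - d + 1)) * (lam ^ d / d.factorial)
      ≤ (1/nR) * ((d:ℝ)*((d:ℝ)-1) * (lam ^ d / d.factorial))
        + (1/nR^2) * (((d:ℝ)*((d:ℝ)-1)) * ((d:ℝ)*((d:ℝ)-1)) * (lam ^ d / d.factorial)) := by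
    intro d hd
    have hdle : (d:ℝ) ≤ nR := by
      have := Finset.mem_range.mp hd
      have : d ≤ m + 2 := by omega
      rw [hnRdef]; exact_mod_cast this
    rcases Nat.eq_zero_or_pos d with h0 | h1
    · subst h0; simp
    · have hd1 : (1:ℝ) ≤ (d:ℝ) := by exact_mod_cast h1
      have hpos : (0:ℝ) < nR - d + 1 := by linarith
      have hnn : (0:ℝ) ≤ (d:ℝ)*((d:ℝ)-1) * (lam ^ d / d.factorial) := by
        have : (0:ℝ) ≤ (d:ℝ)*((d:ℝ)-1) := by nlinarith
        positivity
      have key : 1/(nR - d + 1) ≤ 1/nR + (d:ℝ)*((d:ℝ)-1)/nR^2 := by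
        have hnR0 : (0:ℝ) < nR := by rw [hnRdef]; positivity
        have h2 : 1/(nR - d + 1) ≤ (nR + (d:ℝ)*((d:ℝ)-1))/nR^2 := by
          rw [div_le_div_iff₀ hpos (by positivity)]
          nlinarith [mul_nonneg (sub_nonneg.2 hdle) (sq_nonneg ((d:ℝ)-1))]
        have h3 : (nR + (d:ℝ)*((d:ℝ)-1))/nR^2 = 1/nR + (d:ℝ)*((d:ℝ)-1)/nR^2 := by
          field_simp
        linarith [h2, h3.le]
      calc ((d : ℝ) * ((d : ℝ) - 1) / (nR - d + 1)) * (lam ^ d / d.factorial)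
          = ((d:ℝ)*((d:ℝ)-1) * (lam ^ d / d.factorial)) * (1/(nR - d + 1)) := by ring
        _ ≤ ((d:ℝ)*((d:ℝ)-1) * (lam ^ d / d.factorial)) * (1/nR + (d:ℝ)*((d:ℝ)-1)/nR^2) :=
            mul_le_mul_of_nonneg_left key hnn
        _ = (1/nR) * ((d:ℝ)*((d:ℝ)-1) * (lam ^ d / d.factorial))
            + (1/nR^2) * (((d:ℝ)*((d:ℝ)-1)) * ((d:ℝ)*((d:ℝ)-1)) * (lam ^ d / d.factorial)) := by
            ring
  have hTle := Finset.sum_le_sum hterm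
  rw [Finset.sum_add_distrib, ← Finset.mul_sum, ← Finset.mul_sum] at hTle
  -- A identity
  set P := ∑ j ∈ range (m + 1), lam ^ j / j.factorial with hPdef
  have hA : ∑ d ∈ range (m + 2 + 1), (d:ℝ)*((d:ℝ)-1) * (lam ^ d / d.factorial)
      = lam^2 * P := by
    have := shift2_trunc lam (fun _ => (1:ℝ)) (m+1)
    simp only [mul_one, one_mul] at this
    rw [show m + 2 + 1 = (m+1)+2 by ring]
    exact this
  -- C identity + bound
  have hC : ∑ d ∈ range (m + 2 + 1),
        ((d:ℝ)*((d:ℝ)-1)) * ((d:ℝ)*((d:ℝ)-1)) * (lam ^ d / d.factorial)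
      = lam^2 * ∑ j ∈ range (m+1), ((j:ℝ)+2)*(((j:ℝ)+1)) * (lam ^ j / j.factorial) := by
    have := shift2_trunc lam (fun j => (j:ℝ)*((j:ℝ)-1)) (m+1)
    rw [show m + 2 + 1 = (m+1)+2 by ring]
    rw [this]
    congr 1
    apply Finset.sum_congr rfl
    intro j _
    push_cast
    ring
  have hCb : ∑ j ∈ range (m+1), ((j:ℝ)+2)*(((j:ℝ)+1)) * (lam ^ j / j.factorial)
      ≤ (lam^2 + 4*lam + 2) * P := by
    have e1 : ∑ j ∈ range (m+1), ((j:ℝ)+2)*(((j:ℝ)+1)) * (lam ^ j / j.factorial)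
        = (∑ j ∈ range (m+1), (j:ℝ)*((j:ℝ)-1) * (lam ^ j / j.factorial))
          + 4 * (∑ j ∈ range (m+1), (j:ℝ) * (lam ^ j / j.factorial))
          + 2 * P := by
      rw [hPdef, Finset.mul_sum, Finset.mul_sum, ← Finset.sum_add_distrib,
        ← Finset.sum_add_distrib]
      exact Finset.sum_congr rfl (fun j _ => by ring)
    rw [e1]
    have h1 := Lq_trunc lam hlam (m+1)
    have h2 := L1_trunc lam hlam (m+1)
    rw [← hPdef] at h1 h2
    nlinarith [hS]
  -- P < S
  have hPS : P < S := by
    rw [hSdef, show m + 2 + 1 = (m+1)+1+1 by ring, Finset.sum_range_succ,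
      Finset.sum_range_succ, ← hPdef]
    have t1 : (0:ℝ) < lam ^ (m+1) / (m+1).factorial := by positivity
    have t2 : (0:ℝ) < lam ^ (m+1+1) / (m+1+1).factorial := by positivity
    linarith
  -- combine
  have hnR0 : (0:ℝ) < nR := by rw [hnRdef]; positivity
  have hPpos : 0 < P := by
    apply Finset.sum_pos (fun i _ => by positivity) (by simp)
  calc ∑ d ∈ range (m + 2 + 1),
        ((d : ℝ) * ((d : ℝ) - 1) / (nR - d + 1)) * (lam ^ d / d.factorial)
      ≤ (1/nR) * (lam^2 * P) + (1/nR^2) * (lam^2 * ((lam^2 + 4*lam + 2) * P)) := by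
        rw [hA] at hTle
        rw [hC] at hTle
        have : (1/nR^2) * (lam^2 * ∑ j ∈ range (m+1), ((j:ℝ)+2)*(((j:ℝ)+1)) * (lam ^ j / j.factorial))
            ≤ (1/nR^2) * (lam^2 * ((lam^2 + 4*lam + 2) * P)) := by
          apply mul_le_mul_of_nonneg_left _ (by positivity)
          exact mul_le_mul_of_nonneg_left hCb (by positivity)
        linarith
    _ < lam ^ 2 / nR ^ 2 * (nR + 2 + 4 * lam + lam ^ 2) * S := by
        have expand : lam ^ 2 / nR ^ 2 * (nR + 2 + 4 * lam + lam ^ 2) * S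
            = (1/nR) * (lam^2 * S) + (1/nR^2) * (lam^2 * ((lam^2 + 4*lam + 2) * S)) := by
          field_simp
          ring
        rw [expand]
        have d1 : (1/nR) * (lam^2 * P) < (1/nR) * (lam^2 * S) := by
          apply mul_lt_mul_of_pos_left _ (by positivity)
          exact mul_lt_mul_of_pos_left hPS (by positivity)
        have d2 : (1/nR^2) * (lam^2 * ((lam^2 + 4*lam + 2) * P))
            ≤ (1/nR^2) * (lam^2 * ((lam^2 + 4*lam + 2) * S)) := by
          apply mul_le_mul_of_nonneg_left _ (by positivity)
          apply mul_le_mul_of_nonneg_left _ (by positivity)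
          exact mul_le_mul_of_nonneg_left hPS.le (by positivity)
        linarith
end

section
/- Let m, n, Δ, v be nonnegative integers with Δ + 1 ≤ n, let 0 < p < 1, set π = p·(1−p)^Δ, and assume 2v < m·π. Let C be a random m×n binary matrix whose entries are i.i.d. Bernoulli(p). Then the probability that C fails to be a Δ-disjunct matrix capable of correcting v errors — i.e., the probability that there exist a (Δ+1)-element set I of column indices and an index k ∈ I such that fewer than 2v+1 rows j satisfy C(j,k) = 1 and C(j,l) = 0 for all l ∈ I∖{k} — is at most (Δ+1)·C(n, Δ+1)·exp(−(m·π/2)·(1 − 2v/(m·π))²). -/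
open Finset

/-- Probability of a realization `C` of an i.i.d. Bernoulli(p) random test matrix. -/
noncomputable def bernWeight {m n : ℕ} (p : ℝ) (C : Fin m → Fin n → Bool) : ℝ :=
  ∏ j : Fin m, ∏ i : Fin n, if C j i then p else 1 - p

/-- Second-order bound `exp (-t) ≤ 1 - t + t²/2` for `t ≥ 0`. -/
lemma exp_neg_le_quad {t : ℝ} (ht : 0 ≤ t) : Real.exp (-t) ≤ 1 - t + t ^ 2 / 2 := by
  have h1 : 1 + t + t ^ 2 / 2 ≤ Real.exp t := Real.quadratic_le_exp_of_nonneg ht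
  have hkey : Real.exp (-t) * Real.exp t = 1 := by
    rw [← Real.exp_add]; simp
  have h2 : (0 : ℝ) < Real.exp (-t) := Real.exp_pos _
  nlinarith [sq_nonneg t, sq_nonneg (t ^ 2)]

/-- Chernoff bound for the lower tail of a "binomial" count, phrased as a finite sum. -/
lemma chernoff_core {α : Type*} [Fintype α] (m v : ℕ) (w : α → ℝ)
    (hw : ∀ a, 0 ≤ w a) (hw1 : ∑ a, w a = 1) (G : α → Prop) [DecidablePred G]
    {q : ℝ} (hq : ∑ a ∈ Finset.univ.filter G, w a = q) (hv : 2 * (v : ℝ) < m * q) :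
    (∑ C : Fin m → α, (∏ j, w (C j)) *
      (if (Finset.univ.filter (fun j => G (C j))).card < 2 * v + 1 then (1 : ℝ) else 0))
      ≤ Real.exp (-(m * q / 2) * (1 - 2 * v / (m * q)) ^ 2) := by
  have hmq : 0 < (m : ℝ) * q := lt_of_le_of_lt (by positivity) hv
  have hq0 : 0 < q := by
    nlinarith [Nat.cast_nonneg (α := ℝ) m]
  have hq1 : q ≤ 1 := by
    rw [← hq, ← hw1]
    exact Finset.sum_le_sum_of_subset_of_nonneg (Finset.filter_subset _ _)
      (fun i _ _ => hw i)
  set t : ℝ := 1 - 2 * (v : ℝ) / ((m : ℝ) * q) with ht_def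
  have ht0 : 0 < t := by
    have h : 2 * (v : ℝ) / ((m : ℝ) * q) < 1 := (div_lt_one hmq).mpr hv
    simp only [ht_def]; linarith
  have hmqt : (m : ℝ) * q * t = (m : ℝ) * q - 2 * v := by
    have hne := hmq.ne'
    rw [ht_def, mul_sub, mul_one, mul_div_cancel₀ (2 * (v : ℝ)) hne]
  set h : α → ℝ := fun a => if G a then Real.exp (-t) else 1 with hh_def
  have hh_nonneg : ∀ a, 0 ≤ h a := by
    intro a; by_cases hG : G a <;> simp [hh_def, hG, (Real.exp_pos _).le]
  -- pointwise exponential bound on the indicator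
  have claim1 : ∀ C : Fin m → α,
      (if (Finset.univ.filter (fun j => G (C j))).card < 2 * v + 1 then (1 : ℝ) else 0)
      ≤ Real.exp (2 * v * t) * ∏ j, h (C j) := by
    intro C
    have hprod : ∏ j, h (C j) =
        Real.exp (-t * ((Finset.univ.filter (fun j => G (C j))).card : ℝ)) := by
      rw [Finset.card_filter]
      push_cast
      rw [Finset.mul_sum, Real.exp_sum]
      refine Finset.prod_congr rfl fun j _ => ?_
      by_cases hG : G (C j) <;> simp [hh_def, hG]
    split_ifs with hcond
    · rw [hprod, ← Real.exp_add]
      apply Real.one_le_exp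
      have hN : ((Finset.univ.filter (fun j => G (C j))).card : ℝ) ≤ 2 * v := by
        exact_mod_cast Nat.lt_succ_iff.mp hcond
      nlinarith
    · exact mul_nonneg (Real.exp_pos _).le (Finset.prod_nonneg fun j _ => hh_nonneg _)
  -- value of the per-coordinate sum
  have hS : ∑ a, w a * h a = q * Real.exp (-t) + (1 - q) := by
    rw [← Finset.sum_filter_add_sum_filter_not Finset.univ G]
    have h1 : ∑ a ∈ Finset.univ.filter G, w a * h a = q * Real.exp (-t) := by
      rw [← hq, Finset.sum_mul]
      refine Finset.sum_congr rfl fun a ha => ?_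
      rw [Finset.mem_filter] at ha
      simp [hh_def, ha.2]
    have h2 : ∑ a ∈ Finset.univ.filter (fun a => ¬ G a), w a * h a = 1 - q := by
      have h3 : ∑ a ∈ Finset.univ.filter (fun a => ¬ G a), w a * h a
          = ∑ a ∈ Finset.univ.filter (fun a => ¬ G a), w a := by
        refine Finset.sum_congr rfl fun a ha => ?_
        rw [Finset.mem_filter] at ha
        simp [hh_def, ha.2]
      have h4 := Finset.sum_filter_add_sum_filter_not Finset.univ G w
      rw [h3]
      rw [hq, hw1] at h4
      linarith
    rw [h1, h2]
  have hS0 : 0 ≤ q * Real.exp (-t) + (1 - q) := by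
    have := (Real.exp_pos (-t)).le
    nlinarith
  have hSle : q * Real.exp (-t) + (1 - q) ≤ Real.exp (q * (Real.exp (-t) - 1)) := by
    have hle := Real.add_one_le_exp (q * (Real.exp (-t) - 1))
    have : q * (Real.exp (-t) - 1) + 1 = q * Real.exp (-t) + (1 - q) := by ring
    linarith
  have hexp2 : Real.exp (-t) ≤ 1 - t + t ^ 2 / 2 := exp_neg_le_quad ht0.le
  have hexponent : 2 * (v : ℝ) * t + (m : ℝ) * (q * (Real.exp (-t) - 1))
      ≤ -((m : ℝ) * q / 2) * t ^ 2 := by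
    have step : 2 * (v : ℝ) * t + (m : ℝ) * (q * (Real.exp (-t) - 1))
        ≤ 2 * (v : ℝ) * t + (m : ℝ) * q * ((1 - t + t ^ 2 / 2) - 1) := by
      nlinarith
    refine step.trans (le_of_eq ?_)
    have : 2 * (v : ℝ) * t + (m : ℝ) * q * ((1 - t + t ^ 2 / 2) - 1)
        = -((m : ℝ) * q / 2) * t ^ 2 + ((m : ℝ) * q * t) * t - ((m : ℝ) * q - 2 * v) * t := by
      ring
    rw [this, hmqt]; ring
  calc
    (∑ C : Fin m → α, (∏ j, w (C j)) *
        (if (Finset.univ.filter (fun j => G (C j))).card < 2 * v + 1 then (1 : ℝ) else 0))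
      ≤ ∑ C : Fin m → α, (∏ j, w (C j)) * (Real.exp (2 * v * t) * ∏ j, h (C j)) := by
        refine Finset.sum_le_sum fun C _ => ?_
        exact mul_le_mul_of_nonneg_left (claim1 C) (Finset.prod_nonneg fun j _ => hw _)
    _ = Real.exp (2 * v * t) * ∑ C : Fin m → α, ∏ j, (w (C j) * h (C j)) := by
        rw [Finset.mul_sum]
        refine Finset.sum_congr rfl fun C _ => ?_
        rw [Finset.prod_mul_distrib]; ring
    _ = Real.exp (2 * v * t) * (∑ a, w a * h a) ^ m := by
        rw [Fintype.sum_pow]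
    _ ≤ Real.exp (2 * v * t) * Real.exp ((m : ℝ) * (q * (Real.exp (-t) - 1))) := by
        refine mul_le_mul_of_nonneg_left ?_ (Real.exp_pos _).le
        rw [hS]
        calc (q * Real.exp (-t) + (1 - q)) ^ m
            ≤ Real.exp (q * (Real.exp (-t) - 1)) ^ m := pow_le_pow_left₀ hS0 hSle m
          _ = Real.exp ((m : ℝ) * (q * (Real.exp (-t) - 1))) := (Real.exp_nat_mul _ m).symm
    _ = Real.exp (2 * v * t + (m : ℝ) * (q * (Real.exp (-t) - 1))) := by
        rw [← Real.exp_add]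
    _ ≤ Real.exp (-((m : ℝ) * q / 2) * t ^ 2) := Real.exp_le_exp.mpr hexponent

/-- The probability that a Bernoulli row is "good" for the pair `(I, k)` equals `p (1-p)^Δ`. -/
lemma row_prob (n Δ : ℕ) (p : ℝ) (I : Finset (Fin n)) (k : Fin n) (hk : k ∈ I)
    (hI : I.card = Δ + 1) :
    ∑ r ∈ Finset.univ.filter
        (fun r : Fin n → Bool => r k = true ∧ ∀ l ∈ I, l ≠ k → r l = false),
      (∏ i, if r i then p else 1 - p) = p * (1 - p) ^ Δ := by
  classical
  set f : Fin n → Bool → ℝ := fun i b =>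
    if i = k then (if b then p else 0)
    else if i ∈ I then (if b then 0 else 1 - p)
    else (if b then p else 1 - p) with hf_def
  have step1 : ∑ r ∈ Finset.univ.filter
        (fun r : Fin n → Bool => r k = true ∧ ∀ l ∈ I, l ≠ k → r l = false),
      (∏ i, if r i then p else 1 - p) = ∑ r : Fin n → Bool, ∏ i, f i (r i) := by
    rw [Finset.sum_filter]
    refine Finset.sum_congr rfl fun r _ => ?_
    by_cases hG : r k = true ∧ ∀ l ∈ I, l ≠ k → r l = false
    · rw [if_pos hG]
      refine Finset.prod_congr rfl fun i _ => ?_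
      by_cases hik : i = k
      · subst hik; simp [hf_def, hG.1]
      · by_cases hiI : i ∈ I
        · simp [hf_def, hik, hiI, hG.2 i hiI hik]
        · simp [hf_def, hik, hiI]
    · rw [if_neg hG]
      push_neg at hG
      by_cases hk' : r k = true
      · obtain ⟨l, hlI, hlk, hl⟩ := hG hk'
        have hl' : r l = true := by
          cases hrl : r l
          · exact absurd hrl hl
          · rfl
        refine (Finset.prod_eq_zero (Finset.mem_univ l) ?_).symm
        have hlk' : l ≠ k := hlk
        simp [hf_def, hlk', hlI, hl']
      · refine (Finset.prod_eq_zero (Finset.mem_univ k) ?_).symm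
        have : r k = false := by
          cases hrk : r k
          · rfl
          · exact absurd hrk hk'
        simp [hf_def, this]
  have hps := Fintype.prod_sum (κ := fun _ : Fin n => Bool) (f := f)
  rw [step1, ← hps]
  have step2 : ∀ i : Fin n, (∑ b : Bool, f i b) =
      if i = k then p else if i ∈ I then 1 - p else 1 := by
    intro i
    rw [Fintype.sum_bool]
    by_cases hik : i = k
    · simp [hf_def, hik]
    · by_cases hiI : i ∈ I <;> simp [hf_def, hik, hiI] <;> ring
  rw [Finset.prod_congr rfl (fun i _ => step2 i)]
  have step3 : ∏ i : Fin n, (if i = k then p else if i ∈ I then 1 - p else 1)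
      = ∏ i ∈ I, (if i = k then p else if i ∈ I then 1 - p else 1) := by
    refine (Finset.prod_subset (Finset.subset_univ I) fun i _ hiI => ?_).symm
    have hik : i ≠ k := fun h => hiI (h ▸ hk)
    simp [hik, hiI]
  rw [step3, ← Finset.mul_prod_erase I _ hk]
  have step4 : ∏ i ∈ I.erase k, (if i = k then p else if i ∈ I then 1 - p else 1)
      = (1 - p) ^ Δ := by
    rw [Finset.prod_congr rfl (fun i hi => ?_), Finset.prod_const,
      Finset.card_erase_of_mem hk, hI]
    · rfl
    · have hik : i ≠ k := Finset.ne_of_mem_erase hi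
      have hiI : i ∈ I := Finset.mem_of_mem_erase hi
      simp [hik, hiI]
  rw [step4]
  simp [hk]

/-- Total weight of a Bernoulli row is 1. -/
lemma row_total (n : ℕ) (p : ℝ) :
    ∑ r : Fin n → Bool, (∏ i, if r i then p else 1 - p) = 1 := by
  have hps := Fintype.prod_sum (κ := fun _ : Fin n => Bool)
    (f := fun (_ : Fin n) (b : Bool) => if b then p else 1 - p)
  rw [← hps]
  have : ∀ i : Fin n, (∑ b : Bool, if b then p else 1 - p) = 1 := by
    intro i; simp [Fintype.sum_bool]
  rw [Finset.prod_congr rfl (fun i _ => this i), Finset.prod_const_one]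

set_option maxHeartbeats 1000000 in
theorem stmt19 (m n Δ v : ℕ) (hΔ : Δ + 1 ≤ n) (p : ℝ) (hp0 : 0 < p) (hp1 : p < 1)
    (π : ℝ) (hπ : π = p * (1 - p) ^ Δ) (hv : 2 * (v : ℝ) < m * π) :
    (∑ C : Fin m → Fin n → Bool,
      bernWeight p C *
        (if ∃ I : Finset (Fin n), I.card = Δ + 1 ∧ ∃ k ∈ I,
            (Finset.univ.filter (fun j : Fin m =>
              C j k = true ∧ ∀ l ∈ I, l ≠ k → C j l = false)).card < 2 * v + 1
         then 1 else 0))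
      ≤ (Δ + 1 : ℝ) * (n.choose (Δ + 1) : ℝ) *
          Real.exp (-(m * π / 2) * (1 - 2 * v / (m * π)) ^ 2) := by
  set E := Real.exp (-(m * π / 2) * (1 - 2 * (v : ℝ) / (m * π)) ^ 2) with hE
  have hE0 : (0 : ℝ) ≤ E := (Real.exp_pos _).le
  set W : (Fin n → Bool) → ℝ := fun r => ∏ i, if r i then p else 1 - p with hW
  have hWnn : ∀ r, 0 ≤ W r := by
    intro r
    refine Finset.prod_nonneg fun i _ => ?_
    by_cases h : r i <;> simp [h] <;> linarith
  have hW1 : ∑ r, W r = 1 := row_total n p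
  have hbernnn : ∀ C : Fin m → Fin n → Bool, 0 ≤ bernWeight p C := by
    intro C
    exact Finset.prod_nonneg fun j _ => hWnn (C j)
  have hbern : ∀ C : Fin m → Fin n → Bool, bernWeight p C = ∏ j, W (C j) := fun C => rfl
  -- per-pair bound
  have key : ∀ I : Finset (Fin n), I.card = Δ + 1 → ∀ k ∈ I,
      (∑ C : Fin m → Fin n → Bool, bernWeight p C *
        (if (Finset.univ.filter (fun j : Fin m =>
            C j k = true ∧ ∀ l ∈ I, l ≠ k → C j l = false)).card < 2 * v + 1
          then (1 : ℝ) else 0)) ≤ E := by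
    intro I hI k hk
    have hq : ∑ r ∈ Finset.univ.filter
        (fun r : Fin n → Bool => r k = true ∧ ∀ l ∈ I, l ≠ k → r l = false), W r = π := by
      rw [hπ]; exact row_prob n Δ p I k hk hI
    simp_rw [hbern]
    exact chernoff_core m v W hWnn hW1
      (fun r : Fin n → Bool => r k = true ∧ ∀ l ∈ I, l ≠ k → r l = false) hq hv
  -- union bound on the indicator
  have hunion : ∀ C : Fin m → Fin n → Bool,
      (if ∃ I : Finset (Fin n), I.card = Δ + 1 ∧ ∃ k ∈ I,
          (Finset.univ.filter (fun j : Fin m =>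
            C j k = true ∧ ∀ l ∈ I, l ≠ k → C j l = false)).card < 2 * v + 1
        then (1 : ℝ) else 0)
      ≤ ∑ I ∈ Finset.powersetCard (Δ + 1) (Finset.univ : Finset (Fin n)), ∑ k ∈ I,
          (if (Finset.univ.filter (fun j : Fin m =>
            C j k = true ∧ ∀ l ∈ I, l ≠ k → C j l = false)).card < 2 * v + 1
          then (1 : ℝ) else 0) := by
    intro C
    split_ifs with hex
    · obtain ⟨I, hIcard, k, hkI, hbad⟩ := hex
      have h1 : (1 : ℝ) ≤ ∑ k' ∈ I,
          (if (Finset.univ.filter (fun j : Fin m =>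
            C j k' = true ∧ ∀ l ∈ I, l ≠ k' → C j l = false)).card < 2 * v + 1
          then (1 : ℝ) else 0) := by
        refine le_trans (le_of_eq (if_pos hbad).symm)
          (Finset.single_le_sum (f := fun k' =>
            if (Finset.univ.filter (fun j : Fin m =>
              C j k' = true ∧ ∀ l ∈ I, l ≠ k' → C j l = false)).card < 2 * v + 1
            then (1 : ℝ) else 0) (fun i _ => ?_) hkI)
        positivity
      refine h1.trans (Finset.single_le_sum (f := fun J => ∑ k' ∈ J,
        (if (Finset.univ.filter (fun j : Fin m =>
          C j k' = true ∧ ∀ l ∈ J, l ≠ k' → C j l = false)).card < 2 * v + 1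
        then (1 : ℝ) else 0))
        (fun J _ => Finset.sum_nonneg fun k' _ => by positivity)
        (Finset.mem_powersetCard_univ.mpr hIcard))
    · exact Finset.sum_nonneg fun J _ => Finset.sum_nonneg fun k' _ => by positivity
  calc
    (∑ C : Fin m → Fin n → Bool,
      bernWeight p C *
        (if ∃ I : Finset (Fin n), I.card = Δ + 1 ∧ ∃ k ∈ I,
            (Finset.univ.filter (fun j : Fin m =>
              C j k = true ∧ ∀ l ∈ I, l ≠ k → C j l = false)).card < 2 * v + 1
         then 1 else 0))
      ≤ ∑ C : Fin m → Fin n → Bool, bernWeight p C *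
          (∑ I ∈ Finset.powersetCard (Δ + 1) (Finset.univ : Finset (Fin n)), ∑ k ∈ I,
            (if (Finset.univ.filter (fun j : Fin m =>
              C j k = true ∧ ∀ l ∈ I, l ≠ k → C j l = false)).card < 2 * v + 1
            then (1 : ℝ) else 0)) := by
        exact Finset.sum_le_sum fun C _ =>
          mul_le_mul_of_nonneg_left (hunion C) (hbernnn C)
    _ = ∑ I ∈ Finset.powersetCard (Δ + 1) (Finset.univ : Finset (Fin n)), ∑ k ∈ I,
          ∑ C : Fin m → Fin n → Bool, bernWeight p C *
            (if (Finset.univ.filter (fun j : Fin m =>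
              C j k = true ∧ ∀ l ∈ I, l ≠ k → C j l = false)).card < 2 * v + 1
            then (1 : ℝ) else 0) := by
        simp_rw [Finset.mul_sum]
        rw [Finset.sum_comm]
        exact Finset.sum_congr rfl fun I _ => Finset.sum_comm
    _ ≤ ∑ I ∈ Finset.powersetCard (Δ + 1) (Finset.univ : Finset (Fin n)), ∑ k ∈ I, E := by
        refine Finset.sum_le_sum fun I hI => Finset.sum_le_sum fun k hk => ?_
        exact key I (Finset.mem_powersetCard_univ.mp hI) k hk
    _ = (Δ + 1 : ℝ) * (n.choose (Δ + 1) : ℝ) * E := by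
        have hstep : ∀ I ∈ Finset.powersetCard (Δ + 1) (Finset.univ : Finset (Fin n)),
            (∑ _k ∈ I, E) = ((Δ + 1 : ℕ) : ℝ) * E := by
          intro I hI
          rw [Finset.sum_const, Finset.mem_powersetCard_univ.mp hI, nsmul_eq_mul]
        rw [Finset.sum_congr rfl hstep, Finset.sum_const, Finset.card_powersetCard,
          Finset.card_univ, Fintype.card_fin, nsmul_eq_mul]
        push_cast
        ring
end
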